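/- arXiv:1903.08425 — 4 statements merged into one kernel-verified Lean document; each statement's English description precedes it below -/
import Mathlib

section
/- Let 𝒞 be a class of simple graphs that is closed under isomorphism and under taking subgraphs, contains K₁ and K₂, and is closed under taking disjoint unions. Then for every finite simple graph G, the 𝒞-vertex-brittleness satisfies κ_𝒞(G) ≤ 2·e_𝒞(G). -/
open Classical SimpleGraph

/-- A class of (simple) graphs: a predicate on graphs over every vertex type. -/
abbrev GraphClass : Type 1 := ∀ (V : Type), SimpleGraph V → Prop

/-- `C` is closed under isomorphism. -/
def ClosedUnderIso (C : GraphClass) : Prop :=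
  ∀ {V W : Type} (G : SimpleGraph V) (H : SimpleGraph W), Nonempty (G ≃g H) → C V G → C W H

/-- `C` is closed under taking subgraphs. -/
def ClosedUnderSubgraphs (C : GraphClass) : Prop :=
  ∀ {V : Type} (G : SimpleGraph V) (H : G.Subgraph), C V G → C ↥H.verts H.coe

/-- `C` is closed under taking disjoint unions. -/
def ClosedUnderDisjointUnion (C : GraphClass) : Prop :=
  ∀ {V W : Type} (G : SimpleGraph V) (H : SimpleGraph W),
    C V G → C W H → C (V ⊕ W) (G.sum H)

/-- The edit distance from `G` to the (monotone) class `C`: the minimum number of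
edges one needs to delete from `G` to obtain a graph in `C` (`⊤` if impossible). -/
noncomputable def editDist (C : GraphClass) {V : Type} (G : SimpleGraph V) : ℕ∞ :=
  sInf {n : ℕ∞ | ∃ F : Set (Sym2 V), F ⊆ G.edgeSet ∧ C V (G.deleteEdges F) ∧ (F.ncard : ℕ∞) = n}

/-- The set of edges of `G` whose two ends receive distinct labels under `f`. -/
def crossEdges {V : Type} (G : SimpleGraph V) (f : V → ℕ) : Set (Sym2 V) :=
  {e | e ∈ G.edgeSet ∧ ∃ u v : V, e = s(u, v) ∧ f u ≠ f v}

/-- The `C`-edge-brittleness of `G`: the minimum, over partitions of `V(G)`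
(given as labellings `f : V → ℕ`) all of whose parts induce subgraphs in `C`,
of the number of edges with ends in distinct parts. -/
noncomputable def edgeBrittleness (C : GraphClass) {V : Type} (G : SimpleGraph V) : ℕ∞ :=
  sInf {n : ℕ∞ | ∃ f : V → ℕ,
    (∀ i : ℕ, C ↥(f ⁻¹' {i}) (G.induce (f ⁻¹' {i}))) ∧ ((crossEdges G f).ncard : ℕ∞) = n}

/-- Given a labelling `g` of the edges of `G`, the set of vertices incident with
edges in two distinct parts. -/
def brittleVertices {V : Type} (G : SimpleGraph V) (g : Sym2 V → ℕ) : Set V :=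
  {v | ∃ e₁ e₂ : Sym2 V, e₁ ∈ G.edgeSet ∧ e₂ ∈ G.edgeSet ∧ v ∈ e₁ ∧ v ∈ e₂ ∧ g e₁ ≠ g e₂}

/-- The vertices incident with an edge of `G` in part `i` of the edge labelling `g`. -/
def partSupport {V : Type} (G : SimpleGraph V) (g : Sym2 V → ℕ) (i : ℕ) : Set V :=
  {v | ∃ e ∈ G.edgeSet, g e = i ∧ v ∈ e}

/-- The subgraph of `G` induced by the edges in part `i` of the edge labelling `g`
(on its own vertex set: the vertices incident with those edges). -/
def partGraph {V : Type} (G : SimpleGraph V) (g : Sym2 V → ℕ) (i : ℕ) :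
    SimpleGraph ↥(partSupport G g i) :=
  (SimpleGraph.fromEdgeSet {e | e ∈ G.edgeSet ∧ g e = i}).induce (partSupport G g i)

/-- The `C`-vertex-brittleness of `G`: the minimum, over partitions of `E(G)`
(given as labellings `g : Sym2 V → ℕ`) all of whose parts induce subgraphs in `C`,
of the number of vertices incident with edges in distinct parts. -/
noncomputable def vertexBrittleness (C : GraphClass) {V : Type} (G : SimpleGraph V) : ℕ∞ :=
  sInf {n : ℕ∞ | ∃ g : Sym2 V → ℕ,
    (∀ i : ℕ, C ↥(partSupport G g i) (partGraph G g i)) ∧ ((brittleVertices G g).ncard : ℕ∞) = n}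

/-- The `C̄`-capacity of `G`: the maximum number of pairwise edge-disjoint subgraphs
of `G`, none of which belongs to `C`. -/
noncomputable def capacity (C : GraphClass) {V : Type} (G : SimpleGraph V) : ℕ∞ :=
  sSup {n : ℕ∞ | ∃ m : ℕ, (m : ℕ∞) = n ∧ ∃ H : Fin m → G.Subgraph,
    (∀ i j, i ≠ j → Disjoint (H i).edgeSet (H j).edgeSet) ∧
    (∀ i, ¬ C ↥(H i).verts (H i).coe)}

/-- The graph obtained from `G` by subdividing the edge `uv` once, using a new vertex. -/
def subdivideEdge {V : Type} (G : SimpleGraph V) (u v : V) : SimpleGraph (V ⊕ Unit) :=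
  SimpleGraph.fromRel fun x y =>
    (∃ a b : V, x = Sum.inl a ∧ y = Sum.inl b ∧ G.Adj a b ∧ s(a, b) ≠ s(u, v)) ∨
    (∃ a : V, x = Sum.inl a ∧ y = Sum.inr () ∧ (a = u ∨ a = v))

/-- A graph bundled with its vertex type. -/
def FGraph : Type 1 := Σ V : Type, SimpleGraph V

/-- `IsSubdivision G H` means `H` is (isomorphic to) a subdivision of `G`. -/
inductive IsSubdivision : FGraph → FGraph → Prop
  | of_iso {V W : Type} (G : SimpleGraph V) (H : SimpleGraph W) :
      Nonempty (G ≃g H) → IsSubdivision ⟨V, G⟩ ⟨W, H⟩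
  | step {V : Type} (G : SimpleGraph V) {u v : V} (h : G.Adj u v) (H : FGraph) :
      IsSubdivision ⟨V ⊕ Unit, subdivideEdge G u v⟩ H → IsSubdivision ⟨V, G⟩ H

/-- `H` is a topological minor of `G`: some subgraph of `G` is isomorphic to a
subdivision of `H`. -/
def IsTopMinor {W V : Type} (H : SimpleGraph W) (G : SimpleGraph V) : Prop :=
  ∃ S : G.Subgraph, IsSubdivision ⟨W, H⟩ ⟨↥S.verts, S.coe⟩

/-- An ideal: a class of graphs closed under isomorphism and topological minors. -/
def IsIdeal (C : GraphClass) : Prop :=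
  ClosedUnderIso C ∧
  ∀ {V W : Type} (G : SimpleGraph V) (H : SimpleGraph W), IsTopMinor H G → C V G → C W H

/-- The image of vertex `v` in the `i`-th copy of `G` inside `Fan(G,S,k)`. -/
noncomputable def fanMap {V : Type} (S : Set V) (k : ℕ) (i : Fin k) (v : V) :
    ↥S ⊕ (↥(Sᶜ : Set V) × Fin k) :=
  if h : v ∈ S then Sum.inl ⟨v, h⟩ else Sum.inr (⟨v, h⟩, i)

/-- `Fan G S k`: the graph obtained from `k` vertex-disjoint copies of `G` by
identifying, for each `v ∈ S`, all copies of `v` (and the copies of each edge of `G[S]`). -/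
noncomputable def Fan {V : Type} (G : SimpleGraph V) (S : Set V) (k : ℕ) :
    SimpleGraph (↥S ⊕ (↥(Sᶜ : Set V) × Fin k)) :=
  SimpleGraph.fromRel fun x y =>
    ∃ (i : Fin k) (a b : V), G.Adj a b ∧ x = fanMap S k i a ∧ y = fanMap S k i b

/-- The triangle `K₃`. -/
def K3 : SimpleGraph (Fin 3) := ⊤

/-- The complete graph `K₄`. -/
def K4 : SimpleGraph (Fin 4) := ⊤

/-- The complete bipartite graph `K_{2,n}`. -/
def K2n (n : ℕ) : SimpleGraph (Fin 2 ⊕ Fin n) := completeBipartiteGraph (Fin 2) (Fin n)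

/-- The complete bipartite graph `K_{2,3}`. -/
def K23 : SimpleGraph (Fin 2 ⊕ Fin 3) := completeBipartiteGraph (Fin 2) (Fin 3)

/-- The diamond `D = K₄ ∖ e`. -/
def Diamond : SimpleGraph (Fin 4) := (⊤ : SimpleGraph (Fin 4)).deleteEdges {s((0 : Fin 4), 1)}

/-- `K⁺_{2,3}`: `K_{2,3}` together with an edge joining the two degree-3 vertices. -/
def K23plus : SimpleGraph (Fin 2 ⊕ Fin 3) :=
  K23 ⊔ SimpleGraph.fromEdgeSet {s(Sum.inl 0, Sum.inl 1)}

/-- `W⁺_k`: the cycle on `2k` vertices together with a hub adjacent to the `k`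
vertices in even position (the wheel with all rim edges subdivided). -/
def Wplus (k : ℕ) : SimpleGraph (Option (ZMod (2 * k))) :=
  SimpleGraph.fromRel fun x y =>
    (∃ a : ZMod (2 * k), x = some a ∧ y = some (a + 1)) ∨
    (∃ a : ZMod (2 * k), x = none ∧ y = some a ∧ a.val % 2 = 0)

/-- An `H`-snare: a pair `(J,S)` with `H` a topological minor of `J`, `S` independent
in `J`, and `J ∖ S` connected. -/
def IsSnare {W V : Type} (H : SimpleGraph W) (J : SimpleGraph V) (S : Set V) : Prop :=
  IsTopMinor H J ∧ (∀ a ∈ S, ∀ b ∈ S, ¬ J.Adj a b) ∧ (J.induce Sᶜ).Connected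

/-- Suppressing the vertex `v` in `J`: delete `v`, joining its (at most two) neighbours;
for a degree 2 vertex `v` this is the contraction `J/v` of an edge incident with `v`. -/
def suppress {V : Type} (J : SimpleGraph V) (v : V) : SimpleGraph ↥({v}ᶜ : Set V) :=
  SimpleGraph.fromRel fun x y => J.Adj ↑x ↑y ∨ (J.Adj ↑x v ∧ J.Adj v ↑y)

/-- An `H`-trap: a minimal `H`-snare. -/
def IsTrap {W V : Type} (H : SimpleGraph W) (J : SimpleGraph V) (S : Set V) : Prop :=
  IsSnare H J S ∧
  (∀ J' : J.Subgraph, J' ≠ ⊤ → ¬ IsSnare H J'.coe {x : ↥J'.verts | ↑x ∈ S}) ∧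
  (∀ v : V, v ∉ S → (J.neighborSet v).ncard = 2 →
    ¬ IsSnare H (suppress J v) {x : ↥({v}ᶜ : Set V) | ↑x ∈ S})

/-- `G` has a tree-decomposition of width at most `w`. -/
def HasTreewidthLE {V : Type} (G : SimpleGraph V) (w : ℕ) : Prop :=
  ∃ (ι : Type) (_ : Fintype ι) (T : SimpleGraph ι) (β : ι → Set V),
    T.IsTree ∧
    (∀ u v : V, G.Adj u v → ∃ t : ι, u ∈ β t ∧ v ∈ β t) ∧
    (∀ v : V, (T.induce {t | v ∈ β t}).Connected) ∧
    (∀ t : ι, (β t).ncard ≤ w + 1)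

/-- A graph is 2-connected if it has more than 2 vertices and remains connected
after deleting any single vertex. -/
def TwoConnected {V : Type} (G : SimpleGraph V) : Prop :=
  2 < Nat.card V ∧ ∀ v : V, (G.induce {x | x ≠ v}).Connected

/-- The class of forests. -/
def ForestClass : GraphClass := fun _ G => G.IsAcyclic

/-- Outerplanar graphs: the graphs with no topological minor isomorphic to `K₄`
or `K_{2,3}`. -/
def Outerplanar {V : Type} (G : SimpleGraph V) : Prop :=
  ¬ IsTopMinor K4 G ∧ ¬ IsTopMinor K23 G

/-- The class of outerplanar graphs. -/
def OuterplanarClass : GraphClass := fun _ G => Outerplanar G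

/-- The graph of `σ(G,P)`: for the path (walk) `P = v₀v₁⋯v_m`, add new vertices
`u₀,…,u_{m-1}`, where `uᵢ` is adjacent exactly to `vᵢ` and `v_{i+1}`. -/
def sigmaGraph {V : Type} (G : SimpleGraph V) {a b : V} (P : G.Walk a b) :
    SimpleGraph (V ⊕ Fin P.length) :=
  SimpleGraph.fromRel fun x y =>
    (∃ p q : V, x = Sum.inl p ∧ y = Sum.inl q ∧ G.Adj p q) ∨
    (∃ (p : V) (i : Fin P.length), x = Sum.inl p ∧ y = Sum.inr i ∧
      (p = P.getVert i ∨ p = P.getVert (i + 1)))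

/-- The new path `P'` of `σ(G,P)` (from the `j`-th vertex of `P` on). -/
noncomputable def sigmaWalk {V : Type} (G : SimpleGraph V) {a b : V} (P : G.Walk a b)
    (j : ℕ) (h : j ≤ P.length) :
    (sigmaGraph G P).Walk (Sum.inl (P.getVert j)) (Sum.inl b) :=
  if hj : j = P.length then
    SimpleGraph.Walk.nil.copy (by rw [hj, SimpleGraph.Walk.getVert_length]) rfl
  else by
    have hlt : j < P.length := lt_of_le_of_ne h hj
    have adj1 : (sigmaGraph G P).Adj (Sum.inl (P.getVert j)) (Sum.inr ⟨j, hlt⟩) :=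
      ⟨by simp, Or.inl (Or.inr ⟨P.getVert j, ⟨j, hlt⟩, rfl, rfl, Or.inl rfl⟩)⟩
    have adj2 : (sigmaGraph G P).Adj (Sum.inr ⟨j, hlt⟩) (Sum.inl (P.getVert (j + 1))) :=
      ⟨by simp, Or.inr (Or.inr ⟨P.getVert (j + 1), ⟨j, hlt⟩, rfl, rfl, Or.inr rfl⟩)⟩
    exact SimpleGraph.Walk.cons adj1 (SimpleGraph.Walk.cons adj2 (sigmaWalk G P (j + 1) hlt))
  termination_by P.length - j
  decreasing_by omega

/-- A hemmed graph: a graph together with a walk in it. -/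
structure HGraph where
  V : Type
  G : SimpleGraph V
  a : V
  b : V
  P : G.Walk a b

/-- The operation `σ` on hemmed graphs. -/
noncomputable def HGraph.step (X : HGraph) : HGraph :=
  ⟨X.V ⊕ Fin X.P.length, sigmaGraph X.G X.P, Sum.inl X.a, Sum.inl X.b,
    (sigmaWalk X.G X.P 0 (Nat.zero_le _)).copy
      (by rw [SimpleGraph.Walk.getVert_zero]) rfl⟩

/-- Adding to `G` a new (apex) vertex adjacent exactly to the vertices in `X`. -/
def AddApex {V : Type} (G : SimpleGraph V) (X : Set V) : SimpleGraph (V ⊕ Unit) :=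
  SimpleGraph.fromRel fun x y =>
    (∃ p q : V, x = Sum.inl p ∧ y = Sum.inl q ∧ G.Adj p q) ∨
    (∃ p : V, x = Sum.inl p ∧ y = Sum.inr () ∧ p ∈ X)

/-- A hemmed graph `(G,P)` is outerplanar: `G` has an outerplanar drawing with `P`
on the boundary of the outer face; equivalently, the graph obtained by adding a new
vertex adjacent to all vertices of `P` is outerplanar. -/
def HemmedOuterplanar {V : Type} (G : SimpleGraph V) {a b : V} (P : G.Walk a b) : Prop :=
  Outerplanar (AddApex G {v | v ∈ P.support})




/-- Any graph on an empty vertex type belongs to `C`. -/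
lemma aux_empty_mem (C : GraphClass) (hiso : ClosedUnderIso C)
    (hsub : ClosedUnderSubgraphs C) (hK1 : C (Fin 1) ⊤)
    (W : Type) (H : SimpleGraph W) (hW : IsEmpty W) : C W H := by
  have h := hsub (⊤ : SimpleGraph (Fin 1)) ⊥ hK1
  refine hiso _ _ ⟨?_⟩ h
  have hE : IsEmpty ↥(⊥ : (⊤ : SimpleGraph (Fin 1)).Subgraph).verts := by
    rw [SimpleGraph.Subgraph.verts_bot]
    exact Set.isEmpty_coe_sort.mpr rfl
  exact ⟨Equiv.equivOfIsEmpty _ _, fun {a b} => isEmptyElim a⟩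

/-- Cardinality bound, Finset version. -/
lemma aux_card_finset {V : Type} [Fintype V] (Fs : Finset (Sym2 V)) :
    {v : V | ∃ e ∈ Fs, v ∈ e}.ncard ≤ 2 * Fs.card := by
  classical
  induction' Fs using Finset.induction_on with e Fs heF ih
  · simp
  · have h1 : {v : V | ∃ e' ∈ insert e Fs, v ∈ e'} ⊆
        {v : V | v ∈ e} ∪ {v : V | ∃ e' ∈ Fs, v ∈ e'} := by
      rintro v ⟨e', he', hve⟩
      rcases Finset.mem_insert.mp he' with rfl | he'
      · exact Or.inl hve
      · exact Or.inr ⟨e', he', hve⟩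
    have h2 : {v : V | v ∈ e}.ncard ≤ 2 := by
      induction e using Sym2.ind with
      | _ a b =>
        have : {v : V | v ∈ s(a, b)} = {a, b} := by
          ext v; simp [Sym2.mem_iff]
        rw [this]
        exact (Set.ncard_insert_le a {b}).trans (by simp)
    calc {v : V | ∃ e' ∈ insert e Fs, v ∈ e'}.ncard
        ≤ ({v : V | v ∈ e} ∪ {v : V | ∃ e' ∈ Fs, v ∈ e'}).ncard :=
          Set.ncard_le_ncard h1 (Set.toFinite _)
      _ ≤ {v : V | v ∈ e}.ncard + {v : V | ∃ e' ∈ Fs, v ∈ e'}.ncard :=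
          Set.ncard_union_le _ _
      _ ≤ 2 + 2 * Fs.card := Nat.add_le_add h2 ih
      _ = 2 * (insert e Fs).card := by
          rw [Finset.card_insert_of_notMem heF]; ring

/-- Cardinality bound: vertices covered by edges in `F` number at most `2 * |F|`. -/
lemma aux_card {V : Type} [Fintype V] (F : Set (Sym2 V)) :
    {v : V | ∃ e ∈ F, v ∈ e}.ncard ≤ 2 * F.ncard := by
  classical
  have h1 : {v : V | ∃ e ∈ F, v ∈ e} = {v : V | ∃ e ∈ F.toFinset, v ∈ e} := by
    ext v; simp
  rw [h1, Set.ncard_eq_toFinset_card' F]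
  exact aux_card_finset F.toFinset

/-- For a monotone class `C` as above, `κ_C(G) ≤ 2 · e_C(G)`. -/
theorem vertexBrittleness_le_two_mul_editDist (C : GraphClass)
    (hiso : ClosedUnderIso C) (hsub : ClosedUnderSubgraphs C)
    (hK1 : C (Fin 1) ⊤) (hK2 : C (Fin 2) ⊤) (hdu : ClosedUnderDisjointUnion C)
    (V : Type) [Fintype V] (G : SimpleGraph V) :
    vertexBrittleness C G ≤ 2 * editDist C G := by
  classical
  simp only [editDist]
  set S : Set ℕ∞ := {n : ℕ∞ | ∃ F : Set (Sym2 V), F ⊆ G.edgeSet ∧ C V (G.deleteEdges F) ∧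
    (F.ncard : ℕ∞) = n} with hS
  rcases Set.eq_empty_or_nonempty S with hSe | hSne
  · rw [hSe, sInf_empty]
    refine le_top.trans_eq ?_
    rw [ENat.mul_top (by norm_num)]
  obtain ⟨F, hFsub, hFC, hFcard⟩ : sInf S ∈ S := csInf_mem hSne
  obtain ⟨enc, henc⟩ := exists_injective_nat (Sym2 V)
  set g : Sym2 V → ℕ := fun e => if e ∈ F then enc e + 1 else 0 with hg
  have hg0 : ∀ e, g e = 0 ↔ e ∉ F := by
    intro e; by_cases he : e ∈ F <;> simp [hg, he]
  -- all parts belong to C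
  have hparts : ∀ i : ℕ, C ↥(partSupport G g i) (partGraph G g i) := by
    intro i
    rcases Nat.eq_zero_or_pos i with rfl | hi
    · -- part 0: a subgraph of G.deleteEdges F
      have hset : {e | e ∈ G.edgeSet ∧ g e = 0} = (G.deleteEdges F).edgeSet := by
        ext e
        simp only [Set.mem_setOf_eq, edgeSet_deleteEdges, Set.mem_diff, hg0]
      have hpg : partGraph G g 0 = (G.deleteEdges F).induce (partSupport G g 0) := by
        rw [partGraph, hset, fromEdgeSet_edgeSet]
      rw [hpg, SimpleGraph.induce_eq_coe_induce_top]
      exact hsub (G.deleteEdges F)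
        ((⊤ : (G.deleteEdges F).Subgraph).induce (partSupport G g 0)) hFC
    · by_cases hex : ∃ e ∈ G.edgeSet, g e = i
      · obtain ⟨e, heG, hei⟩ := hex
        have heF : e ∈ F := by
          by_contra h
          rw [(hg0 e).mpr h] at hei; omega
        revert heG hei heF
        induction e using Sym2.ind with
        | _ a b =>
        intro heG hei heF
        have huniq : ∀ e', e' ∈ G.edgeSet → g e' = i → e' = s(a, b) := by
          intro e' hG' he'
          by_cases h : e' ∈ F
          · refine henc ?_
            have h1 : enc e' + 1 = i := by simpa [hg, h] using he'
            have h2 : enc s(a, b) + 1 = i := by simpa [hg, heF] using hei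
            omega
          · rw [(hg0 e').mpr h] at he'; omega
        have hab : G.Adj a b := G.mem_edgeSet.mp heG
        have hne : a ≠ b := hab.ne
        have hsupp : ∀ v : V, v ∈ partSupport G g i ↔ v = a ∨ v = b := by
          intro v
          constructor
          · rintro ⟨e', he', hgi, hve⟩
            rw [huniq e' he' hgi] at hve
            simpa [Sym2.mem_iff] using hve
          · rintro (rfl | rfl)
            · exact ⟨s(v, b), heG, hei, Sym2.mem_mk_left _ _⟩
            · exact ⟨s(a, v), heG, hei, Sym2.mem_mk_right _ _⟩
        have ha : a ∈ partSupport G g i := (hsupp a).mpr (Or.inl rfl)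
        have hb : b ∈ partSupport G g i := (hsupp b).mpr (Or.inr rfl)
        have hadj : ∀ u v : ↥(partSupport G g i),
            (partGraph G g i).Adj u v ↔ (u : V) ≠ (v : V) := by
          intro u v
          constructor
          · intro h
            have h2 := h.ne
            exact fun hval => h2 (Subtype.ext hval)
          · intro huv
            show (SimpleGraph.fromEdgeSet {e | e ∈ G.edgeSet ∧ g e = i}).Adj (u : V) (v : V)
            rw [SimpleGraph.fromEdgeSet_adj]
            refine ⟨?_, huv⟩
            rcases (hsupp u).mp u.2 with hu | hu <;> rcases (hsupp v).mp v.2 with hv | hv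
            · exact absurd (hu.trans hv.symm) huv
            · rw [hu, hv]; exact ⟨heG, hei⟩
            · rw [hu, hv, Sym2.eq_swap]; exact ⟨heG, hei⟩
            · exact absurd (hu.trans hv.symm) huv
        set f : Fin 2 → ↥(partSupport G g i) :=
          fun x => if x = 0 then ⟨a, ha⟩ else ⟨b, hb⟩ with hf
        have hfi : Function.Injective f := by
          intro x y hxy
          have hxy2 : (f x : V) = (f y : V) := congrArg _ hxy
          fin_cases x <;> fin_cases y <;> simp [hf] at hxy2 ⊢ <;>
            first
              | exact absurd hxy2 hne
              | exact absurd hxy2.symm hne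
        have hfs : Function.Surjective f := by
          intro v
          rcases (hsupp v).mp v.2 with hv | hv
          · exact ⟨0, Subtype.ext (by simp [hf, hv])⟩
          · exact ⟨1, Subtype.ext (by simp [hf, hv])⟩
        refine hiso (⊤ : SimpleGraph (Fin 2)) _ ⟨⟨Equiv.ofBijective f ⟨hfi, hfs⟩, ?_⟩⟩ hK2
        intro x y
        simp only [Equiv.ofBijective_apply, hadj, SimpleGraph.top_adj]
        exact (Subtype.coe_injective.comp hfi).ne_iff
      · -- empty part
        have hE : IsEmpty ↥(partSupport G g i) := by
          rw [Set.isEmpty_coe_sort]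
          ext v
          simp only [partSupport, Set.mem_setOf_eq, Set.mem_empty_iff_false, iff_false]
          rintro ⟨e, he, hgi, -⟩
          exact hex ⟨e, he, hgi⟩
        exact aux_empty_mem C hiso hsub hK1 _ _ hE
  have hble : vertexBrittleness C G ≤ ((brittleVertices G g).ncard : ℕ∞) :=
    sInf_le ⟨g, hparts, rfl⟩
  have hsub2 : brittleVertices G g ⊆ {v : V | ∃ e ∈ F, v ∈ e} := by
    rintro v ⟨e₁, e₂, he₁, he₂, hv₁, hv₂, hne⟩
    by_cases h1 : e₁ ∈ F
    · exact ⟨e₁, h1, hv₁⟩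
    by_cases h2 : e₂ ∈ F
    · exact ⟨e₂, h2, hv₂⟩
    exact absurd (((hg0 e₁).mpr h1).trans ((hg0 e₂).mpr h2).symm) hne
  have hcard : (brittleVertices G g).ncard ≤ 2 * F.ncard :=
    (Set.ncard_le_ncard hsub2 (Set.toFinite _)).trans (aux_card F)
  calc vertexBrittleness C G ≤ ((brittleVertices G g).ncard : ℕ∞) := hble
    _ ≤ ((2 * F.ncard : ℕ) : ℕ∞) := by exact_mod_cast hcard
    _ = 2 * ((F.ncard : ℕ) : ℕ∞) := by push_cast; ring
    _ = 2 * sInf S := by rw [hFcard]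
end

section
/- Let 𝒞 be an ideal (closed under isomorphism and topological minors). If G' is a topological minor of a graph G, then the 𝒞-vertex-brittleness satisfies κ_𝒞(G') ≤ κ_𝒞(G). -/
open Classical SimpleGraph

section Aux

variable {V₁ V₂ : Type}

lemma partGraph_adj {V : Type} {G : SimpleGraph V} {g : Sym2 V → ℕ} {i : ℕ}
    {x y : ↥(partSupport G g i)} :
    (partGraph G g i).Adj x y ↔ G.Adj ↑x ↑y ∧ g s(↑x, ↑y) = i := by
  unfold partGraph
  simp only [comap_adj, Function.Embedding.coe_subtype, fromEdgeSet_adj, Set.mem_setOf_eq,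
    mem_edgeSet]
  constructor
  · rintro ⟨⟨h1, h2⟩, _⟩; exact ⟨h1, h2⟩
  · rintro ⟨h1, h2⟩; exact ⟨⟨h1, h2⟩, fun hxy => G.loopless.irrefl _ (hxy ▸ h1)⟩

lemma mem_partSupport {V : Type} {G : SimpleGraph V} {g : Sym2 V → ℕ} {i : ℕ} {v : V} :
    v ∈ partSupport G g i ↔ ∃ e ∈ G.edgeSet, g e = i ∧ v ∈ e := Iff.rfl

/-- Master lemma: an injective homomorphism-image gives a topological minor. -/
lemma isTopMinor_of_injective (G₁ : SimpleGraph V₁) (G₂ : SimpleGraph V₂) (f : V₁ → V₂)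
    (hinj : Function.Injective f) (hf : ∀ a b, G₁.Adj a b → G₂.Adj (f a) (f b)) :
    IsTopMinor G₁ G₂ := by
  refine ⟨⟨Set.range f, fun x y => ∃ a b, G₁.Adj a b ∧ f a = x ∧ f b = y, ?_, ?_, ?_⟩, ?_⟩
  · rintro x y ⟨a, b, hab, rfl, rfl⟩; exact hf a b hab
  · rintro x y ⟨a, b, hab, rfl, rfl⟩; exact ⟨a, rfl⟩
  · constructor; rintro x y ⟨a, b, hab, rfl, rfl⟩; exact ⟨b, a, hab.symm, rfl, rfl⟩
  refine IsSubdivision.of_iso _ _ ⟨⟨Equiv.ofInjective f hinj, ?_⟩⟩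
  intro a b
  show (∃ a' b', G₁.Adj a' b' ∧ f a' = f a ∧ f b' = f b) ↔ G₁.Adj a b
  constructor
  · rintro ⟨a', b', h, ha, hb⟩; rwa [hinj ha, hinj hb] at h
  · exact fun h => ⟨a, b, h, rfl, rfl⟩

lemma subdivideEdge_adj_inl_inl {G : SimpleGraph V₁} {u v a b : V₁} :
    (subdivideEdge G u v).Adj (Sum.inl a) (Sum.inl b) ↔ G.Adj a b ∧ s(a, b) ≠ s(u, v) := by
  unfold subdivideEdge
  simp only [fromRel_adj]
  constructor
  · rintro ⟨hne, h | h⟩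
    · rcases h with ⟨a', b', ha, hb, hab, hne'⟩ | ⟨a', ha, hb, _⟩
      · cases ha; cases hb; exact ⟨hab, hne'⟩
      · exact absurd hb (by simp)
    · rcases h with ⟨a', b', ha, hb, hab, hne'⟩ | ⟨a', ha, hb, _⟩
      · cases ha; cases hb; exact ⟨hab.symm, by rwa [Sym2.eq_swap] at hne'⟩
      · exact absurd hb (by simp)
  · rintro ⟨hab, hne⟩
    exact ⟨by simpa using hab.ne, Or.inl (Or.inl ⟨a, b, rfl, rfl, hab, hne⟩)⟩

lemma subdivideEdge_adj_inl_inr {G : SimpleGraph V₁} {u v a : V₁} {t : Unit} :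
    (subdivideEdge G u v).Adj (Sum.inl a) (Sum.inr t) ↔ a = u ∨ a = v := by
  cases t
  unfold subdivideEdge
  simp only [fromRel_adj]
  constructor
  · rintro ⟨hne, h | h⟩
    · rcases h with ⟨a', b', _, hb, _, _⟩ | ⟨a', ha, _, hav⟩
      · exact absurd hb (by simp)
      · cases ha; exact hav
    · rcases h with ⟨a', b', ha, _, _, _⟩ | ⟨a', ha, hb, _⟩
      · exact absurd ha (by simp)
      · exact absurd hb (by simp)
  · rintro h
    exact ⟨by simp, Or.inl (Or.inr ⟨a, by simp, by simp, h⟩)⟩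

lemma subdivideEdge_adj_inr_inr {G : SimpleGraph V₁} {u v : V₁} {s t : Unit} :
    ¬ (subdivideEdge G u v).Adj (Sum.inr s) (Sum.inr t) := by
  cases s; cases t; exact fun h => h.ne rfl

/-- Master lemma 2: if `G₂` contains an injective image of `G₁` with one edge
subdivided, then `G₁` is a topological minor of `G₂`. -/
lemma isTopMinor_of_subdivide (G₁ : SimpleGraph V₁) (G₂ : SimpleGraph V₂) (f : V₁ → V₂)
    (x₀ : V₂) (hinj : Function.Injective f) (hx₀ : x₀ ∉ Set.range f)
    {u v : V₁} (huv : G₁.Adj u v)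
    (hmap : ∀ a b, G₁.Adj a b → s(a, b) ≠ s(u, v) → G₂.Adj (f a) (f b))
    (h1 : G₂.Adj (f u) x₀) (h2 : G₂.Adj x₀ (f v)) : IsTopMinor G₁ G₂ := by
  classical
  set r : V₂ → V₂ → Prop := fun p q =>
    (∃ a b, G₁.Adj a b ∧ s(a, b) ≠ s(u, v) ∧ p = f a ∧ q = f b) ∨
    (p = f u ∧ q = x₀) ∨ (p = x₀ ∧ q = f v) with hr
  refine ⟨⟨Set.range f ∪ {x₀}, fun p q => r p q ∨ r q p, ?_, ?_, ?_⟩, ?_⟩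
  · rintro p q (h | h)
    · rcases h with ⟨a, b, hab, hne, rfl, rfl⟩ | ⟨rfl, rfl⟩ | ⟨rfl, rfl⟩
      · exact hmap a b hab hne
      · exact h1
      · exact h2
    · rcases h with ⟨a, b, hab, hne, rfl, rfl⟩ | ⟨rfl, rfl⟩ | ⟨rfl, rfl⟩
      · exact (hmap a b hab hne).symm
      · exact h1.symm
      · exact h2.symm
  · rintro p q (h | h)
    · rcases h with ⟨a, b, _, _, rfl, rfl⟩ | ⟨rfl, rfl⟩ | ⟨rfl, rfl⟩
      · exact Or.inl ⟨a, rfl⟩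
      · exact Or.inl ⟨u, rfl⟩
      · exact Or.inr rfl
    · rcases h with ⟨a, b, _, _, rfl, rfl⟩ | ⟨rfl, rfl⟩ | ⟨rfl, rfl⟩
      · exact Or.inl ⟨b, rfl⟩
      · exact Or.inr rfl
      · exact Or.inl ⟨v, rfl⟩
  · constructor; rintro p q h; exact h.symm
  refine IsSubdivision.step G₁ huv _ (IsSubdivision.of_iso _ _ ⟨⟨?_, ?_⟩⟩)
  · refine Equiv.ofBijective (fun z => Sum.recOn z
      (fun a => ⟨f a, Or.inl ⟨a, rfl⟩⟩) (fun _ => ⟨x₀, Or.inr rfl⟩)) ⟨?_, ?_⟩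
    · rintro (a | a) (b | b) hab <;> simp only [Subtype.mk.injEq] at hab
      · exact congrArg Sum.inl (hinj (congrArg Subtype.val hab))
      · exact absurd ⟨a, congrArg Subtype.val hab⟩ hx₀
      · exact absurd ⟨b, (congrArg Subtype.val hab).symm⟩ hx₀
      · cases a; cases b; rfl
    · rintro ⟨p, hp | hp⟩
      · obtain ⟨a, rfl⟩ := hp; exact ⟨Sum.inl a, rfl⟩
      · cases hp; exact ⟨Sum.inr (), rfl⟩
  · rintro (a | a) (b | b)
    · show (r (f a) (f b) ∨ r (f b) (f a)) ↔ _
      rw [subdivideEdge_adj_inl_inl]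
      constructor
      · rintro (h | h)
        · rcases h with ⟨a', b', hab, hne, ha, hb⟩ | ⟨ha, hb⟩ | ⟨ha, hb⟩
          · obtain rfl := hinj ha; obtain rfl := hinj hb; exact ⟨hab, hne⟩
          · exact absurd ⟨b, hb⟩ hx₀
          · exact absurd ⟨a, ha⟩ hx₀
        · rcases h with ⟨a', b', hab, hne, ha, hb⟩ | ⟨ha, hb⟩ | ⟨ha, hb⟩
          · obtain rfl := hinj ha; obtain rfl := hinj hb
            exact ⟨hab.symm, by rwa [Sym2.eq_swap] at hne⟩
          · exact absurd ⟨a, hb⟩ hx₀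
          · exact absurd ⟨b, ha⟩ hx₀
      · rintro ⟨hab, hne⟩; exact Or.inl (Or.inl ⟨a, b, hab, hne, rfl, rfl⟩)
    · show (r (f a) x₀ ∨ r x₀ (f a)) ↔ _
      rw [subdivideEdge_adj_inl_inr]
      constructor
      · rintro (h | h)
        · rcases h with ⟨a', b', hab, hne, ha, hb⟩ | ⟨ha, hb⟩ | ⟨ha, hb⟩
          · exact absurd ⟨b', hb.symm⟩ hx₀
          · exact Or.inl (hinj ha)
          · exact absurd ⟨a, ha⟩ hx₀
        · rcases h with ⟨a', b', hab, hne, ha, hb⟩ | ⟨ha, hb⟩ | ⟨ha, hb⟩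
          · exact absurd ⟨a', ha.symm⟩ hx₀
          · exact absurd ⟨a, hb⟩ hx₀
          · exact Or.inr (hinj hb)
      · rintro (rfl | rfl)
        · exact Or.inl (Or.inr (Or.inl ⟨rfl, rfl⟩))
        · exact Or.inr (Or.inr (Or.inr ⟨rfl, rfl⟩))
    · show (r x₀ (f b) ∨ r (f b) x₀) ↔ _
      rw [adj_comm, subdivideEdge_adj_inl_inr]
      constructor
      · rintro (h | h)
        · rcases h with ⟨a', b', hab, hne, ha, hb⟩ | ⟨ha, hb⟩ | ⟨ha, hb⟩
          · exact absurd ⟨a', ha.symm⟩ hx₀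
          · exact absurd ⟨b, hb⟩ hx₀
          · exact Or.inr (hinj hb)
        · rcases h with ⟨a', b', hab, hne, ha, hb⟩ | ⟨ha, hb⟩ | ⟨ha, hb⟩
          · exact absurd ⟨b', hb.symm⟩ hx₀
          · exact Or.inl (hinj ha)
          · exact absurd ⟨b, ha⟩ hx₀
      · rintro (rfl | rfl)
        · exact Or.inr (Or.inr (Or.inl ⟨rfl, rfl⟩))
        · exact Or.inl (Or.inr (Or.inr ⟨rfl, rfl⟩))
    · show (r x₀ x₀ ∨ r x₀ x₀) ↔ _
      constructor
      · rintro (h | h) <;>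
        · rcases h with ⟨a', b', hab, hne, ha, hb⟩ | ⟨ha, hb⟩ | ⟨ha, hb⟩
          · exact absurd ⟨a', ha.symm⟩ hx₀
          · exact absurd ⟨u, ha.symm⟩ hx₀
          · exact absurd ⟨v, hb.symm⟩ hx₀
      · exact fun h => absurd h subdivideEdge_adj_inr_inr

/-- Transfer lemma for vertex brittleness. -/
lemma vertexBrittleness_le_of_forall (C : GraphClass) (G₁ : SimpleGraph V₁)
    (G₂ : SimpleGraph V₂)
    (h : ∀ g : Sym2 V₂ → ℕ, (∀ i, C _ (partGraph G₂ g i)) →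
      ∃ g' : Sym2 V₁ → ℕ, (∀ i, C _ (partGraph G₁ g' i)) ∧
        (brittleVertices G₁ g').ncard ≤ (brittleVertices G₂ g).ncard) :
    vertexBrittleness C G₁ ≤ vertexBrittleness C G₂ := by
  refine le_sInf ?_
  rintro n ⟨g, hg, rfl⟩
  obtain ⟨g', hg', hle⟩ := h g hg
  calc vertexBrittleness C G₁ ≤ ((brittleVertices G₁ g').ncard : ℕ∞) :=
        sInf_le ⟨g', hg', rfl⟩
    _ ≤ _ := by exact_mod_cast hle

lemma brittle_ncard_le_inj {B₁ : Set V₁} {B₂ : Set V₂} [Finite V₂] (f : V₁ → V₂)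
    (hf : Function.Injective f) (h : ∀ w ∈ B₁, f w ∈ B₂) : B₁.ncard ≤ B₂.ncard :=
  Set.ncard_le_ncard_of_injOn f h hf.injOn (Set.toFinite _)

lemma brittle_ncard_le_aux {B₁ : Set V₁} {B₂ : Set V₂} [Finite V₂] (f : V₁ → V₂)
    (hf : Function.Injective f) (x : V₂) (hx : x ∉ Set.range f) (z : V₁)
    (h : ∀ w ∈ B₁, f w ∈ B₂ ∨ (w = z ∧ x ∈ B₂)) : B₁.ncard ≤ B₂.ncard := by
  classical
  refine Set.ncard_le_ncard_of_injOn (fun w => if f w ∈ B₂ then f w else x) ?_ ?_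
    (Set.toFinite _)
  · intro w hw
    by_cases hb : f w ∈ B₂
    · simpa [hb] using hb
    · rcases h w hw with h' | h'
      · exact absurd h' hb
      · simpa [hb] using h'.2
  · intro w₁ h₁ w₂ h₂ he
    by_cases b₁ : f w₁ ∈ B₂ <;> by_cases b₂ : f w₂ ∈ B₂ <;> simp only [b₁, b₂, if_pos, if_neg,
      if_true, if_false] at he
    · exact hf he
    · exact absurd ⟨w₁, he⟩ hx
    · exact absurd ⟨w₂, he.symm⟩ hx
    · obtain ⟨rfl, -⟩ := (h w₁ h₁).resolve_left b₁
      obtain ⟨rfl, -⟩ := (h w₂ h₂).resolve_left b₂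
      rfl

lemma vb_le_iso (C : GraphClass) (hC : IsIdeal C) [Finite V₁]
    (G₁ : SimpleGraph V₁) (G₂ : SimpleGraph V₂) (e : G₁ ≃g G₂) :
    vertexBrittleness C G₂ ≤ vertexBrittleness C G₁ := by
  apply vertexBrittleness_le_of_forall
  intro g hg
  refine ⟨fun z => g (Sym2.map e.symm z), fun i => hC.2 _ _ ?_ (hg i), ?_⟩
  · have hmem : ∀ w : V₂, w ∈ partSupport G₂ (fun z => g (Sym2.map e.symm z)) i →
        (e.symm w : V₁) ∈ partSupport G₁ g i := by
      rintro w ⟨d, hd, hgi, hw⟩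
      exact ⟨Sym2.map e.symm d, e.symm.toHom.map_mem_edgeSet hd, hgi,
        Sym2.mem_map.mpr ⟨w, hw, rfl⟩⟩
    refine isTopMinor_of_injective _ _ (fun w => ⟨e.symm ↑w, hmem ↑w w.2⟩) ?_ ?_
    · intro a b hab
      exact Subtype.ext (e.symm.toEquiv.injective (congrArg Subtype.val hab))
    · intro a b hab
      rw [partGraph_adj] at hab ⊢
      refine ⟨e.symm.map_rel_iff.mpr hab.1, ?_⟩
      show g s(e.symm ↑a, e.symm ↑b) = i
      rw [← Sym2.map_pair_eq]
      exact hab.2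
  · refine brittle_ncard_le_inj (fun w => (e.symm w : V₁)) e.symm.toEquiv.injective ?_
    rintro w ⟨e₁, e₂, h₁, h₂, hw₁, hw₂, hne⟩
    exact ⟨Sym2.map e.symm e₁, Sym2.map e.symm e₂, e.symm.toHom.map_mem_edgeSet h₁,
      e.symm.toHom.map_mem_edgeSet h₂, Sym2.mem_map.mpr ⟨w, hw₁, rfl⟩,
      Sym2.mem_map.mpr ⟨w, hw₂, rfl⟩, hne⟩

lemma vb_le_subgraph (C : GraphClass) (hC : IsIdeal C) {V : Type} [Finite V]
    (G : SimpleGraph V) (S : G.Subgraph) :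
    vertexBrittleness C S.coe ≤ vertexBrittleness C G := by
  apply vertexBrittleness_le_of_forall
  intro g hg
  refine ⟨fun z => g (Sym2.map Subtype.val z), fun i => hC.2 _ _ ?_ (hg i), ?_⟩
  · have hmem : ∀ w : ↥S.verts,
        w ∈ partSupport S.coe (fun z => g (Sym2.map Subtype.val z)) i →
        (w : V) ∈ partSupport G g i := by
      rintro w ⟨d, hd, hgi, hw⟩
      exact ⟨Sym2.map Subtype.val d, S.hom.map_mem_edgeSet hd, hgi,
        Sym2.mem_map.mpr ⟨w, hw, rfl⟩⟩
    refine isTopMinor_of_injective _ _ (fun w => ⟨(↑w : V), hmem ↑w w.2⟩) ?_ ?_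
    · intro a b hab
      simp only [Subtype.mk.injEq] at hab
      exact Subtype.ext (Subtype.ext hab)
    · intro a b hab
      rw [partGraph_adj] at hab ⊢
      refine ⟨hab.1.adj_sub, ?_⟩
      show g s(((a : ↥S.verts) : V), ((b : ↥S.verts) : V)) = i
      rw [← Sym2.map_pair_eq]
      exact hab.2
  · refine brittle_ncard_le_inj (fun w => (w : V)) Subtype.val_injective ?_
    rintro w ⟨e₁, e₂, h₁, h₂, hw₁, hw₂, hne⟩
    exact ⟨Sym2.map Subtype.val e₁, Sym2.map Subtype.val e₂, S.hom.map_mem_edgeSet h₁,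
      S.hom.map_mem_edgeSet h₂, Sym2.mem_map.mpr ⟨w, hw₁, rfl⟩,
      Sym2.mem_map.mpr ⟨w, hw₂, rfl⟩, hne⟩

lemma subdivide_edge_mem {V : Type} {G : SimpleGraph V} {u v : V} :
    ∀ e ∈ G.edgeSet, e ≠ s(u, v) → Sym2.map Sum.inl e ∈ (subdivideEdge G u v).edgeSet := by
  intro e
  induction e using Sym2.ind with
  | _ a b =>
    intro he hne
    rw [Sym2.map_pair_eq, mem_edgeSet, subdivideEdge_adj_inl_inl]
    exact ⟨(mem_edgeSet G).mp he, hne⟩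

lemma part_isTopMinor_inl {V : Type} {G : SimpleGraph V} {u v : V}
    (g : Sym2 (V ⊕ Unit) → ℕ) (g' : Sym2 V → ℕ) (ℓ : ℕ)
    (hcoh : ∀ e ∈ G.edgeSet, g' e = ℓ → e ≠ s(u, v) ∧ g (Sym2.map Sum.inl e) = ℓ) :
    IsTopMinor (partGraph G g' ℓ) (partGraph (subdivideEdge G u v) g ℓ) := by
  have hmem : ∀ w : V, w ∈ partSupport G g' ℓ →
      Sum.inl w ∈ partSupport (subdivideEdge G u v) g ℓ := by
    rintro w ⟨d, hd, hℓ, hw⟩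
    obtain ⟨hne, hlab⟩ := hcoh d hd hℓ
    exact ⟨Sym2.map Sum.inl d, subdivide_edge_mem d hd hne, hlab,
      Sym2.mem_map.mpr ⟨w, hw, rfl⟩⟩
  refine isTopMinor_of_injective _ _ (fun w => ⟨Sum.inl ↑w, hmem ↑w w.2⟩) ?_ ?_
  · intro a b hab
    simp only [Subtype.mk.injEq, Sum.inl.injEq] at hab
    exact Subtype.ext hab
  · intro a b hab
    rw [partGraph_adj] at hab ⊢
    obtain ⟨hadj, hlab⟩ := hab
    have h2 := hcoh s(↑a, ↑b) ((mem_edgeSet G).mpr hadj) hlab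
    refine ⟨subdivideEdge_adj_inl_inl.mpr ⟨hadj, h2.1⟩, ?_⟩
    show g s(Sum.inl (a : V), Sum.inl (b : V)) = ℓ
    rw [← Sym2.map_pair_eq]
    exact h2.2

lemma vb_le_subdivide (C : GraphClass) (hC : IsIdeal C) {V : Type} [Finite V]
    (G : SimpleGraph V) {u v : V} (huv : G.Adj u v) :
    vertexBrittleness C G ≤ vertexBrittleness C (subdivideEdge G u v) := by
  classical
  apply vertexBrittleness_le_of_forall
  intro g hg
  set G₂ := subdivideEdge G u v with hG₂
  have hux : G₂.Adj (Sum.inl u) (Sum.inr ()) := subdivideEdge_adj_inl_inr.mpr (Or.inl rfl)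
  have hvx : G₂.Adj (Sum.inl v) (Sum.inr ()) := subdivideEdge_adj_inl_inr.mpr (Or.inr rfl)
  set i := g s(Sum.inl u, Sum.inr ()) with hi
  set j := g s(Sum.inl v, Sum.inr ()) with hj
  set g₀ : Sym2 V → ℕ := fun z => g (Sym2.map Sum.inl z) with hg₀
  have hxr : (Sum.inr () : V ⊕ Unit) ∉ Set.range (Sum.inl : V → V ⊕ Unit) := by
    rintro ⟨w, hw⟩; exact Sum.inl_ne_inr hw
  have hx_mem_i : (Sum.inr () : V ⊕ Unit) ∈ partSupport G₂ g i :=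
    ⟨s(Sum.inl u, Sum.inr ()), (mem_edgeSet G₂).mpr hux, hi.symm,
      Sym2.mem_iff.mpr (Or.inr rfl)⟩
  have hu_mem_i : (Sum.inl u : V ⊕ Unit) ∈ partSupport G₂ g i :=
    ⟨s(Sum.inl u, Sum.inr ()), (mem_edgeSet G₂).mpr hux, hi.symm,
      Sym2.mem_iff.mpr (Or.inl rfl)⟩
  by_cases hij : i = j
  · -- Case A : the two half-edges have the same label
    set g' : Sym2 V → ℕ := fun z => if z = s(u, v) then i else g₀ z with hg'
    have hg'uv : g' s(u, v) = i := by simp [hg']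
    have hg'ne : ∀ e : Sym2 V, e ≠ s(u, v) → g' e = g₀ e := by
      intro e he; simp only [hg']; rw [if_neg he]
    refine ⟨g', fun ℓ => ?_, ?_⟩
    · by_cases hℓ : ℓ = i
      · subst hℓ
        refine hC.2 _ _ ?_ (hg i)
        have hu_mem : u ∈ partSupport G g' i :=
          ⟨s(u, v), (mem_edgeSet G).mpr huv, hg'uv, Sym2.mem_iff.mpr (Or.inl rfl)⟩
        have hv_mem : v ∈ partSupport G g' i :=
          ⟨s(u, v), (mem_edgeSet G).mpr huv, hg'uv, Sym2.mem_iff.mpr (Or.inr rfl)⟩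
        have hmem : ∀ w : V, w ∈ partSupport G g' i → Sum.inl w ∈ partSupport G₂ g i := by
          rintro w ⟨d, hd, hℓd, hw⟩
          by_cases hduv : d = s(u, v)
          · subst hduv
            rcases Sym2.mem_iff.mp hw with rfl | rfl
            · exact hu_mem_i
            · exact ⟨s(Sum.inl w, Sum.inr ()), (mem_edgeSet G₂).mpr hvx,
                by rw [← hj]; exact hij.symm, Sym2.mem_iff.mpr (Or.inl rfl)⟩
          · exact ⟨Sym2.map Sum.inl d, subdivide_edge_mem d hd hduv,
              (hg'ne d hduv).symm.trans hℓd, Sym2.mem_map.mpr ⟨w, hw, rfl⟩⟩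
        refine isTopMinor_of_subdivide (u := ⟨u, hu_mem⟩) (v := ⟨v, hv_mem⟩) _ _
          (fun w => (⟨Sum.inl ↑w, hmem ↑w w.2⟩ : ↥(partSupport G₂ g i)))
          ⟨Sum.inr (), hx_mem_i⟩ ?_ ?_ ?_ ?_ ?_ ?_
        · intro a b hab
          simp only [Subtype.mk.injEq, Sum.inl.injEq] at hab
          exact Subtype.ext hab
        · rintro ⟨w, hw⟩
          exact Sum.inl_ne_inr (congrArg Subtype.val hw)
        · exact partGraph_adj.mpr ⟨huv, hg'uv⟩
        · intro a b hab hne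
          rw [partGraph_adj] at hab
          have hne' : s((a : V), (b : V)) ≠ s(u, v) := by
            intro hh
            apply hne
            rcases Sym2.eq_iff.mp hh with ⟨ha, hb⟩ | ⟨ha, hb⟩
            · rw [Sym2.eq_iff]; exact Or.inl ⟨Subtype.ext ha, Subtype.ext hb⟩
            · rw [Sym2.eq_iff]; exact Or.inr ⟨Subtype.ext ha, Subtype.ext hb⟩
          refine partGraph_adj.mpr ⟨subdivideEdge_adj_inl_inl.mpr ⟨hab.1, hne'⟩, ?_⟩
          show g s(Sum.inl (a : V), Sum.inl (b : V)) = i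
          rw [← Sym2.map_pair_eq]
          exact (hg'ne _ hne').symm.trans hab.2
        · exact partGraph_adj.mpr ⟨hux, hi.symm⟩
        · refine partGraph_adj.mpr ⟨hvx.symm, ?_⟩
          show g s(Sum.inr (), Sum.inl v) = i
          rw [Sym2.eq_swap, ← hj]
          exact hij.symm
      · refine hC.2 _ _ (part_isTopMinor_inl g g' ℓ ?_) (hg ℓ)
        intro e he hge
        have hne : e ≠ s(u, v) := by
          rintro rfl; rw [hg'uv] at hge; exact hℓ hge.symm
        exact ⟨hne, (hg'ne e hne).symm.trans hge⟩
    · have key : ∀ (w : V) (e : Sym2 V), e ∈ G.edgeSet → w ∈ e →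
          ∃ E ∈ G₂.edgeSet, Sum.inl w ∈ E ∧ g E = g' e := by
        intro w e he hw
        by_cases hduv : e = s(u, v)
        · subst hduv
          rw [hg'uv]
          rcases Sym2.mem_iff.mp hw with rfl | rfl
          · exact ⟨s(Sum.inl w, Sum.inr ()), (mem_edgeSet G₂).mpr hux,
              Sym2.mem_iff.mpr (Or.inl rfl), hi.symm⟩
          · exact ⟨s(Sum.inl w, Sum.inr ()), (mem_edgeSet G₂).mpr hvx,
              Sym2.mem_iff.mpr (Or.inl rfl), by rw [← hj]; exact hij.symm⟩
        · exact ⟨Sym2.map Sum.inl e, subdivide_edge_mem e he hduv,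
            Sym2.mem_map.mpr ⟨w, hw, rfl⟩, (hg'ne e hduv).symm⟩
      refine brittle_ncard_le_inj Sum.inl Sum.inl_injective ?_
      rintro w ⟨e₁, e₂, h₁, h₂, hw₁, hw₂, hne⟩
      obtain ⟨E₁, hE₁, hwE₁, hl₁⟩ := key w e₁ h₁ hw₁
      obtain ⟨E₂, hE₂, hwE₂, hl₂⟩ := key w e₂ h₂ hw₂
      exact ⟨E₁, E₂, hE₁, hE₂, hwE₁, hwE₂, by rw [hl₁, hl₂]; exact hne⟩
  · -- Case B : the two half-edges have distinct labels; the new vertex is brittle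
    have hxB : (Sum.inr () : V ⊕ Unit) ∈ brittleVertices G₂ g :=
      ⟨s(Sum.inl u, Sum.inr ()), s(Sum.inl v, Sum.inr ()), (mem_edgeSet G₂).mpr hux,
        (mem_edgeSet G₂).mpr hvx, Sym2.mem_iff.mpr (Or.inr rfl),
        Sym2.mem_iff.mpr (Or.inr rfl), by rw [← hi, ← hj]; exact hij⟩
    have hfin : (insert i (insert j (g₀ '' G.edgeSet))).Finite :=
      (((Set.toFinite G.edgeSet).image g₀).insert j).insert i
    obtain ⟨k, hk⟩ := hfin.exists_notMem
    have hkim : ∀ e ∈ G.edgeSet, g₀ e ≠ k := fun e he h =>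
      hk (Set.mem_insert_of_mem _ (Set.mem_insert_of_mem _ ⟨e, he, h⟩))
    by_cases hPu : ∀ E ∈ G₂.edgeSet, Sum.inl u ∈ E → g E = i
    · by_cases hPv : ∀ E ∈ G₂.edgeSet, Sum.inl v ∈ E → g E = j
      · -- B1 : both branch vertices are pure
        set g' : Sym2 V → ℕ := fun z => if z = s(u, v) then i else g₀ z with hg'
        have hg'uv : g' s(u, v) = i := by simp [hg']
        have hg'ne : ∀ e : Sym2 V, e ≠ s(u, v) → g' e = g₀ e := by
          intro e he; simp only [hg']; rw [if_neg he]
        refine ⟨g', fun ℓ => ?_, ?_⟩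
        · by_cases hℓ : ℓ = i
          · subst hℓ
            refine hC.2 _ _ ?_ (hg i)
            have hmem : ∀ w : ↥(partSupport G g' i), (w : V) ≠ v →
                Sum.inl (w : V) ∈ partSupport G₂ g i := by
              rintro ⟨w, d, hd, hℓd, hw⟩ hwv
              by_cases hduv : d = s(u, v)
              · subst hduv
                rcases Sym2.mem_iff.mp hw with rfl | rfl
                · exact hu_mem_i
                · exact absurd rfl hwv
              · exact ⟨Sym2.map Sum.inl d, subdivide_edge_mem d hd hduv,
                  (hg'ne d hduv).symm.trans hℓd, Sym2.mem_map.mpr ⟨w, hw, rfl⟩⟩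
            set f : ↥(partSupport G g' i) → ↥(partSupport G₂ g i) :=
              fun w => if hwv : (w : V) = v then ⟨Sum.inr (), hx_mem_i⟩
                else ⟨Sum.inl ↑w, hmem w hwv⟩ with hf
            refine isTopMinor_of_injective _ _ f ?_ ?_
            · intro a b hab
              simp only [hf] at hab
              split_ifs at hab with h1 h2 h2
              · exact Subtype.ext (h1.trans h2.symm)
              · exact absurd (congrArg Subtype.val hab) (fun h => Sum.inr_ne_inl h)
              · exact absurd (congrArg Subtype.val hab) (fun h => Sum.inl_ne_inr h)
              · simp only [Subtype.mk.injEq, Sum.inl.injEq] at hab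
                exact Subtype.ext hab
            · intro a b hab
              rw [partGraph_adj] at hab
              obtain ⟨hadj, hlab⟩ := hab
              have hnotv : ∀ c d : V, G.Adj c d → s(c, d) ≠ s(u, v) →
                  g' s(c, d) = i → c ≠ v := by
                intro c d hcd hne hl hcv
                subst hcv
                have hE : Sym2.map Sum.inl s(c, d) ∈ G₂.edgeSet :=
                  subdivide_edge_mem _ ((mem_edgeSet G).mpr hcd) hne
                have hj' := hPv _ hE
                  (by rw [Sym2.map_pair_eq]; exact Sym2.mem_iff.mpr (Or.inl rfl))
                exact hij (((hg'ne _ hne).symm.trans hl).symm.trans hj')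
              simp only [hf]
              split_ifs with h1 h2 h2
              · exact absurd hadj (by rw [h1, h2]; exact G.loopless.irrefl v)
              · have hbu : (b : V) = u := by
                  by_contra hbu
                  have hne : s((a : V), (b : V)) ≠ s(u, v) := by
                    intro hh
                    rcases Sym2.eq_iff.mp hh with ⟨h3, h4⟩ | ⟨h3, h4⟩
                    · exact h2 h4
                    · exact hbu h4
                  exact hnotv _ _ hadj hne hlab h1
                refine partGraph_adj.mpr ⟨?_, ?_⟩
                · show G₂.Adj (Sum.inr ()) (Sum.inl (b : V))
                  rw [hbu]; exact hux.symm
                · show g s(Sum.inr (), Sum.inl (b : V)) = i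
                  rw [hbu, Sym2.eq_swap] <;> exact hi.symm
              · have hau : (a : V) = u := by
                  by_contra hau
                  have hne : s((b : V), (a : V)) ≠ s(u, v) := by
                    intro hh
                    rcases Sym2.eq_iff.mp hh with ⟨h3, h4⟩ | ⟨h3, h4⟩
                    · exact h1 h4
                    · exact hau h4
                  exact hnotv _ _ hadj.symm hne (by rw [Sym2.eq_swap]; exact hlab) h2
                refine partGraph_adj.mpr ⟨?_, ?_⟩
                · show G₂.Adj (Sum.inl (a : V)) (Sum.inr ())
                  rw [hau]; exact hux
                · show g s(Sum.inl (a : V), Sum.inr ()) = i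
                  rw [hau] <;> exact hi.symm
              · have hne : s((a : V), (b : V)) ≠ s(u, v) := by
                  intro hh
                  rcases Sym2.eq_iff.mp hh with ⟨h3, h4⟩ | ⟨h3, h4⟩
                  · exact h2 h4
                  · exact h1 h3
                refine partGraph_adj.mpr ⟨subdivideEdge_adj_inl_inl.mpr ⟨hadj, hne⟩, ?_⟩
                show g s(Sum.inl (a : V), Sum.inl (b : V)) = i
                rw [← Sym2.map_pair_eq]
                exact (hg'ne _ hne).symm.trans hlab
          · refine hC.2 _ _ (part_isTopMinor_inl g g' ℓ ?_) (hg ℓ)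
            intro e he hge
            have hne : e ≠ s(u, v) := by
              rintro rfl; rw [hg'uv] at hge; exact hℓ hge.symm
            exact ⟨hne, (hg'ne e hne).symm.trans hge⟩
        · have key : ∀ (w : V), w ≠ v → ∀ (e : Sym2 V), e ∈ G.edgeSet → w ∈ e →
              ∃ E ∈ G₂.edgeSet, Sum.inl w ∈ E ∧ g E = g' e := by
            intro w hwv e he hw
            by_cases hduv : e = s(u, v)
            · subst hduv
              rw [hg'uv]
              rcases Sym2.mem_iff.mp hw with rfl | rfl
              · exact ⟨s(Sum.inl w, Sum.inr ()), (mem_edgeSet G₂).mpr hux,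
                  Sym2.mem_iff.mpr (Or.inl rfl), hi.symm⟩
              · exact absurd rfl hwv
            · exact ⟨Sym2.map Sum.inl e, subdivide_edge_mem e he hduv,
                Sym2.mem_map.mpr ⟨w, hw, rfl⟩, (hg'ne e hduv).symm⟩
          refine brittle_ncard_le_aux Sum.inl Sum.inl_injective (Sum.inr ()) hxr v ?_
          rintro w ⟨e₁, e₂, h₁, h₂, hw₁, hw₂, hne⟩
          by_cases hwv : w = v
          · exact Or.inr ⟨hwv, hxB⟩
          obtain ⟨E₁, hE₁, hwE₁, hl₁⟩ := key w hwv e₁ h₁ hw₁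
          obtain ⟨E₂, hE₂, hwE₂, hl₂⟩ := key w hwv e₂ h₂ hw₂
          exact Or.inl ⟨E₁, E₂, hE₁, hE₂, hwE₁, hwE₂, by rw [hl₁, hl₂]; exact hne⟩
      · -- B2' : v is impure; give uv a fresh label
        push_neg at hPv
        obtain ⟨E₀, hE₀, hvE₀, hgE₀⟩ := hPv
        have hx_mem_j : (Sum.inr () : V ⊕ Unit) ∈ partSupport G₂ g j :=
          ⟨s(Sum.inl v, Sum.inr ()), (mem_edgeSet G₂).mpr hvx, hj.symm,
            Sym2.mem_iff.mpr (Or.inr rfl)⟩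
        have hv_mem_j : (Sum.inl v : V ⊕ Unit) ∈ partSupport G₂ g j :=
          ⟨s(Sum.inl v, Sum.inr ()), (mem_edgeSet G₂).mpr hvx, hj.symm,
            Sym2.mem_iff.mpr (Or.inl rfl)⟩
        set g' : Sym2 V → ℕ := fun z => if z = s(u, v) then k else g₀ z with hg'
        have hg'uv : g' s(u, v) = k := by simp [hg']
        have hg'ne : ∀ e : Sym2 V, e ≠ s(u, v) → g' e = g₀ e := by
          intro e he; simp only [hg']; rw [if_neg he]
        refine ⟨g', fun ℓ => ?_, ?_⟩
        · by_cases hℓ : ℓ = k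
          · subst hℓ
            refine hC.2 _ _ ?_ (hg j)
            have hsupp : ∀ w : ↥(partSupport G g' ℓ), (w : V) = u ∨ (w : V) = v := by
              rintro ⟨w, d, hd, hℓd, hw⟩
              have hduv : d = s(u, v) := by
                by_contra h
                exact hkim d hd ((hg'ne d h).symm.trans hℓd)
              subst hduv
              exact Sym2.mem_iff.mp hw
            have hmem : ∀ w : ↥(partSupport G g' ℓ), (w : V) ≠ u →
                Sum.inl (w : V) ∈ partSupport G₂ g j := by
              intro w hwu
              rcases hsupp w with h | h
              · exact absurd h hwu
              · rw [h]; exact hv_mem_j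
            set f : ↥(partSupport G g' ℓ) → ↥(partSupport G₂ g j) :=
              fun w => if hwu : (w : V) = u then ⟨Sum.inr (), hx_mem_j⟩
                else ⟨Sum.inl ↑w, hmem w hwu⟩ with hf
            refine isTopMinor_of_injective _ _ f ?_ ?_
            · intro a b hab
              simp only [hf] at hab
              split_ifs at hab with h1 h2 h2
              · exact Subtype.ext (h1.trans h2.symm)
              · exact absurd (congrArg Subtype.val hab) (fun h => Sum.inr_ne_inl h)
              · exact absurd (congrArg Subtype.val hab) (fun h => Sum.inl_ne_inr h)
              · simp only [Subtype.mk.injEq, Sum.inl.injEq] at hab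
                exact Subtype.ext hab
            · intro a b hab
              rw [partGraph_adj] at hab
              obtain ⟨hadj, hlab⟩ := hab
              have hsab : s((a : V), (b : V)) = s(u, v) := by
                by_contra h
                exact hkim _ ((mem_edgeSet G).mpr hadj) ((hg'ne _ h).symm.trans hlab)
              simp only [hf]
              split_ifs with h1 h2 h2
              · exact absurd hadj (by rw [h1, h2]; exact G.loopless.irrefl u)
              · have hbv : (b : V) = v := by
                  rcases Sym2.eq_iff.mp hsab with ⟨h3, h4⟩ | ⟨h3, h4⟩
                  · exact h4
                  · exact absurd h4 h2
                refine partGraph_adj.mpr ⟨?_, ?_⟩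
                · show G₂.Adj (Sum.inr ()) (Sum.inl (b : V))
                  rw [hbv]; exact hvx.symm
                · show g s(Sum.inr (), Sum.inl (b : V)) = j
                  rw [hbv, Sym2.eq_swap] <;> exact hj.symm
              · have hav : (a : V) = v := by
                  rcases Sym2.eq_iff.mp hsab with ⟨h3, h4⟩ | ⟨h3, h4⟩
                  · exact absurd h3 h1
                  · exact h3
                refine partGraph_adj.mpr ⟨?_, ?_⟩
                · show G₂.Adj (Sum.inl (a : V)) (Sum.inr ())
                  rw [hav]; exact hvx
                · show g s(Sum.inl (a : V), Sum.inr ()) = j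
                  rw [hav] <;> exact hj.symm
              · rcases Sym2.eq_iff.mp hsab with ⟨h3, h4⟩ | ⟨h3, h4⟩
                · exact absurd h3 h1
                · exact absurd h4 h2
          · refine hC.2 _ _ (part_isTopMinor_inl g g' ℓ ?_) (hg ℓ)
            intro e he hge
            have hne : e ≠ s(u, v) := by
              rintro rfl; rw [hg'uv] at hge; exact hℓ hge.symm
            exact ⟨hne, (hg'ne e hne).symm.trans hge⟩
        · refine brittle_ncard_le_aux Sum.inl Sum.inl_injective (Sum.inr ()) hxr u ?_
          rintro w hw
          by_cases hwu : w = u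
          · exact Or.inr ⟨hwu, hxB⟩
          left
          by_cases hwv : w = v
          · refine ⟨s(Sum.inl w, Sum.inr ()), E₀, ?_, hE₀,
              Sym2.mem_iff.mpr (Or.inl rfl), ?_, ?_⟩
            · rw [hwv]; exact (mem_edgeSet G₂).mpr hvx
            · rw [hwv]; exact hvE₀
            · show g s(Sum.inl w, Sum.inr ()) ≠ g E₀
              rw [hwv, ← hj]; exact fun h => hgE₀ h.symm
          · obtain ⟨e₁, e₂, h₁, h₂, hw₁, hw₂, hne⟩ := hw
            have key : ∀ e ∈ G.edgeSet, w ∈ e →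
                ∃ E ∈ G₂.edgeSet, Sum.inl w ∈ E ∧ g E = g' e := by
              intro e he hwe
              have hne' : e ≠ s(u, v) := by
                rintro rfl
                rcases Sym2.mem_iff.mp hwe with h | h
                exacts [hwu h, hwv h]
              exact ⟨Sym2.map Sum.inl e, subdivide_edge_mem e he hne',
                Sym2.mem_map.mpr ⟨w, hwe, rfl⟩, (hg'ne e hne').symm⟩
            obtain ⟨E₁, hE₁, hwE₁, hl₁⟩ := key e₁ h₁ hw₁
            obtain ⟨E₂, hE₂, hwE₂, hl₂⟩ := key e₂ h₂ hw₂
            exact ⟨E₁, E₂, hE₁, hE₂, hwE₁, hwE₂, by rw [hl₁, hl₂]; exact hne⟩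
    · -- B2 : u is impure; give uv a fresh label
      push_neg at hPu
      obtain ⟨E₀, hE₀, huE₀, hgE₀⟩ := hPu
      set g' : Sym2 V → ℕ := fun z => if z = s(u, v) then k else g₀ z with hg'
      have hg'uv : g' s(u, v) = k := by simp [hg']
      have hg'ne : ∀ e : Sym2 V, e ≠ s(u, v) → g' e = g₀ e := by
        intro e he; simp only [hg']; rw [if_neg he]
      refine ⟨g', fun ℓ => ?_, ?_⟩
      · by_cases hℓ : ℓ = k
        · subst hℓ
          refine hC.2 _ _ ?_ (hg i)
          have hsupp : ∀ w : ↥(partSupport G g' ℓ), (w : V) = u ∨ (w : V) = v := by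
            rintro ⟨w, d, hd, hℓd, hw⟩
            have hduv : d = s(u, v) := by
              by_contra h
              exact hkim d hd ((hg'ne d h).symm.trans hℓd)
            subst hduv
            exact Sym2.mem_iff.mp hw
          have hmem : ∀ w : ↥(partSupport G g' ℓ), (w : V) ≠ v →
              Sum.inl (w : V) ∈ partSupport G₂ g i := by
            intro w hwv
            rcases hsupp w with h | h
            · rw [h]; exact hu_mem_i
            · exact absurd h hwv
          set f : ↥(partSupport G g' ℓ) → ↥(partSupport G₂ g i) :=
            fun w => if hwv : (w : V) = v then ⟨Sum.inr (), hx_mem_i⟩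
              else ⟨Sum.inl ↑w, hmem w hwv⟩ with hf
          refine isTopMinor_of_injective _ _ f ?_ ?_
          · intro a b hab
            simp only [hf] at hab
            split_ifs at hab with h1 h2 h2
            · exact Subtype.ext (h1.trans h2.symm)
            · exact absurd (congrArg Subtype.val hab) (fun h => Sum.inr_ne_inl h)
            · exact absurd (congrArg Subtype.val hab) (fun h => Sum.inl_ne_inr h)
            · simp only [Subtype.mk.injEq, Sum.inl.injEq] at hab
              exact Subtype.ext hab
          · intro a b hab
            rw [partGraph_adj] at hab
            obtain ⟨hadj, hlab⟩ := hab
            have hsab : s((a : V), (b : V)) = s(u, v) := by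
              by_contra h
              exact hkim _ ((mem_edgeSet G).mpr hadj) ((hg'ne _ h).symm.trans hlab)
            simp only [hf]
            split_ifs with h1 h2 h2
            · exact absurd hadj (by rw [h1, h2]; exact G.loopless.irrefl v)
            · have hbu : (b : V) = u := by
                rcases Sym2.eq_iff.mp hsab with ⟨h3, h4⟩ | ⟨h3, h4⟩
                · exact absurd h4 h2
                · exact h4
              refine partGraph_adj.mpr ⟨?_, ?_⟩
              · show G₂.Adj (Sum.inr ()) (Sum.inl (b : V))
                rw [hbu]; exact hux.symm
              · show g s(Sum.inr (), Sum.inl (b : V)) = i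
                rw [hbu, Sym2.eq_swap] <;> exact hi.symm
            · have hau : (a : V) = u := by
                rcases Sym2.eq_iff.mp hsab with ⟨h3, h4⟩ | ⟨h3, h4⟩
                · exact h3
                · exact absurd h3 h1
              refine partGraph_adj.mpr ⟨?_, ?_⟩
              · show G₂.Adj (Sum.inl (a : V)) (Sum.inr ())
                rw [hau]; exact hux
              · show g s(Sum.inl (a : V), Sum.inr ()) = i
                rw [hau] <;> exact hi.symm
            · rcases Sym2.eq_iff.mp hsab with ⟨h3, h4⟩ | ⟨h3, h4⟩
              · exact absurd h4 h2
              · exact absurd h3 h1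
        · refine hC.2 _ _ (part_isTopMinor_inl g g' ℓ ?_) (hg ℓ)
          intro e he hge
          have hne : e ≠ s(u, v) := by
            rintro rfl; rw [hg'uv] at hge; exact hℓ hge.symm
          exact ⟨hne, (hg'ne e hne).symm.trans hge⟩
      · refine brittle_ncard_le_aux Sum.inl Sum.inl_injective (Sum.inr ()) hxr v ?_
        rintro w hw
        by_cases hwv : w = v
        · exact Or.inr ⟨hwv, hxB⟩
        left
        by_cases hwu : w = u
        · refine ⟨s(Sum.inl w, Sum.inr ()), E₀, ?_, hE₀,
            Sym2.mem_iff.mpr (Or.inl rfl), ?_, ?_⟩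
          · rw [hwu]; exact (mem_edgeSet G₂).mpr hux
          · rw [hwu]; exact huE₀
          · show g s(Sum.inl w, Sum.inr ()) ≠ g E₀
            rw [hwu, ← hi]; exact fun h => hgE₀ h.symm
        · obtain ⟨e₁, e₂, h₁, h₂, hw₁, hw₂, hne⟩ := hw
          have key : ∀ e ∈ G.edgeSet, w ∈ e →
              ∃ E ∈ G₂.edgeSet, Sum.inl w ∈ E ∧ g E = g' e := by
            intro e he hwe
            have hne' : e ≠ s(u, v) := by
              rintro rfl
              rcases Sym2.mem_iff.mp hwe with h | h
              exacts [hwu h, hwv h]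
            exact ⟨Sym2.map Sum.inl e, subdivide_edge_mem e he hne',
              Sym2.mem_map.mpr ⟨w, hwe, rfl⟩, (hg'ne e hne').symm⟩
          obtain ⟨E₁, hE₁, hwE₁, hl₁⟩ := key e₁ h₁ hw₁
          obtain ⟨E₂, hE₂, hwE₂, hl₂⟩ := key e₂ h₂ hw₂
          exact ⟨E₁, E₂, hE₁, hE₂, hwE₁, hwE₂, by rw [hl₁, hl₂]; exact hne⟩

lemma vb_isSubdivision (C : GraphClass) (hC : IsIdeal C) {A B : FGraph}
    (h : IsSubdivision A B) :
    Finite A.1 → Finite B.1 → vertexBrittleness C A.2 ≤ vertexBrittleness C B.2 := by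
  induction h with
  | of_iso G H he =>
    intro _ hB
    haveI := hB
    obtain ⟨e⟩ := he
    exact vb_le_iso C hC _ _ e.symm
  | step G huv B hsub ih =>
    intro hA hB
    haveI := hA
    exact le_trans (vb_le_subdivide C hC G huv) (ih inferInstance hB)

end Aux

/-- If `C` is an ideal and `G'` is a topological minor of `G`,
then `κ_C(G') ≤ κ_C(G)`. -/
theorem vertexBrittleness_le_of_isTopMinor (C : GraphClass) (hC : IsIdeal C)
    (V W : Type) [Fintype V] [Fintype W] (G : SimpleGraph V) (G' : SimpleGraph W)
    (h : IsTopMinor G' G) :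
    vertexBrittleness C G' ≤ vertexBrittleness C G := by
  obtain ⟨S, hS⟩ := h
  exact (vb_isSubdivision C hC hS inferInstance inferInstance).trans
    (vb_le_subgraph C hC G S)
end

section
/- Let T be a finite tree and 𝒯 a family of subtrees of T. For every positive integer k, either there exist k pairwise vertex-disjoint members of 𝒯, or there is a set Z ⊆ V(T) with |Z| < k such that every member of 𝒯 contains a vertex of Z. -/
open Classical SimpleGraph

section TreeAux
variable {V : Type} {T : SimpleGraph V}


lemma isPath_concat {u v w : V} {P : T.Walk u v} (hP : P.IsPath) (h : T.Adj v w)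
    (hw : w ∉ P.support) : (P.concat h).IsPath := by
  have : (SimpleGraph.Walk.cons h.symm P.reverse).IsPath :=
    hP.reverse.cons (by rwa [SimpleGraph.Walk.support_reverse, List.mem_reverse])
  have h2 := this.reverse
  rwa [SimpleGraph.Walk.reverse_cons, SimpleGraph.Walk.reverse_reverse] at h2

/-- In a tree, adjacent vertices have different distances to the root. -/
lemma tree_adj_dist_ne (hT : T.IsTree) (r : V) {u v : V} (h : T.Adj u v) :
    T.dist r u ≠ T.dist r v := by
  intro heq
  obtain ⟨P, hP, hPl⟩ := hT.isConnected.exists_path_of_dist r u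
  have hvP : v ∉ P.support := by
    intro hv
    have hspec := P.take_spec hv
    have hlen : (P.takeUntil v hv).length + (P.dropUntil v hv).length = P.length := by
      conv_rhs => rw [← hspec]
      rw [SimpleGraph.Walk.length_append]
    have h1 : T.dist r v ≤ (P.takeUntil v hv).length := SimpleGraph.dist_le _
    have h2 : T.dist v u ≤ (P.dropUntil v hv).length := SimpleGraph.dist_le _
    have h3 : T.dist r u ≤ T.dist r v + T.dist v u := hT.isConnected.dist_triangle
    have h4 : T.dist v u = 0 := by omega
    have := (hT.isConnected.dist_eq_zero_iff (u := v) (v := u)).1 h4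
    exact h.ne' this
  have hP' : (P.concat h).IsPath := isPath_concat hP h hvP
  obtain ⟨Q, hQ, hQl⟩ := hT.isConnected.exists_path_of_dist r v
  have := (hT.existsUnique_path r v).unique hP' hQ
  have hlen : (P.concat h).length = Q.length := by rw [this]
  rw [SimpleGraph.Walk.length_concat] at hlen
  omega

lemma tree_adj_dist_cases (hT : T.IsTree) (r : V) {u v : V} (h : T.Adj u v) :
    T.dist r v = T.dist r u + 1 ∨ T.dist r v + 1 = T.dist r u := by
  have h1 : T.dist u v = 1 := (SimpleGraph.dist_eq_one_iff_adj).2 h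
  have h2 : T.dist v u = 1 := (SimpleGraph.dist_eq_one_iff_adj).2 h.symm
  have t1 : T.dist r v ≤ T.dist r u + T.dist u v := hT.isConnected.dist_triangle
  have t2 : T.dist r u ≤ T.dist r v + T.dist v u := hT.isConnected.dist_triangle
  have := tree_adj_dist_ne hT r h
  omega

/-- Unique parent in a tree. -/
lemma tree_unique_parent (hT : T.IsTree) (r : V) {w b₁ b₂ : V}
    (h₁ : T.Adj b₁ w) (h₂ : T.Adj b₂ w)
    (d₁ : T.dist r b₁ + 1 = T.dist r w) (d₂ : T.dist r b₂ + 1 = T.dist r w) :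
    b₁ = b₂ := by
  obtain ⟨P₁, hP₁, hl₁⟩ := hT.isConnected.exists_path_of_dist r b₁
  obtain ⟨P₂, hP₂, hl₂⟩ := hT.isConnected.exists_path_of_dist r b₂
  have hw : ∀ {b : V} (P : T.Walk r b), P.IsPath → P.length + 1 = T.dist r w →
      w ∉ P.support := by
    intro b P hP hl hwP
    have hspec := P.take_spec hwP
    have hlen : (P.takeUntil w hwP).length + (P.dropUntil w hwP).length = P.length := by
      conv_rhs => rw [← hspec]
      rw [SimpleGraph.Walk.length_append]
    have h1 : T.dist r w ≤ (P.takeUntil w hwP).length := SimpleGraph.dist_le _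
    omega
  have hw₁ := hw P₁ hP₁ (by omega)
  have hw₂ := hw P₂ hP₂ (by omega)
  have hP₁' : (P₁.concat h₁).IsPath := isPath_concat hP₁ h₁ hw₁
  have hP₂' : (P₂.concat h₂).IsPath := isPath_concat hP₂ h₂ hw₂
  have heq := (hT.existsUnique_path r w).unique hP₁' hP₂'
  have := congrArg (fun p => (SimpleGraph.Walk.reverse p).getVert 1) heq
  simpa [SimpleGraph.Walk.reverse_concat, SimpleGraph.Walk.getVert_cons_succ] using this

/-- Along a path in a tree, once a step goes away from the root, all later
steps do; so a path with first step up cannot end at depth ≤ start. -/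
lemma tree_up_path_false (hT : T.IsTree) (r : V) :
    ∀ {c v : V} (Q : T.Walk c v) {u : V} (h : T.Adj u c), (SimpleGraph.Walk.cons h Q).IsPath →
      T.dist r v ≤ T.dist r u → T.dist r c = T.dist r u + 1 → False := by
  intro c v Q
  induction Q with
  | nil =>
    intro u h hp hle hup
    omega
  | @cons c e v h' R ih =>
    intro u h hp hle hup
    rcases tree_adj_dist_cases hT r h' with hup' | hdown
    · exact ih h' hp.of_cons (by omega) (by omega)
    · -- e is also a parent of c
      have : u = e := tree_unique_parent hT r h h'.symm (by omega) (by omega)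
      rw [SimpleGraph.Walk.cons_isPath_iff] at hp
      refine hp.2 ?_
      rw [this, SimpleGraph.Walk.support_cons]
      exact List.mem_cons_of_mem _ R.start_mem_support

lemma tree_exists_penult (hT : T.IsTree) {a w : V} {n : ℕ} (h : T.dist a w = n + 1) :
    ∃ b, T.Adj b w ∧ T.dist a b = n := by
  obtain ⟨p, hp, hl⟩ := hT.isConnected.exists_path_of_dist a w
  have hne : w ≠ a := by
    intro he; rw [he, SimpleGraph.dist_self] at h; omega
  obtain ⟨b, hadj, q, hq⟩ := (p.reverse).exists_eq_cons_of_ne hne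
  refine ⟨b, hadj.symm, ?_⟩
  have hlen : q.length = n := by
    have : p.reverse.length = n + 1 := by rw [SimpleGraph.Walk.length_reverse]; omega
    rw [hq] at this; simpa using this
  have h1 : T.dist a b ≤ n := by
    rw [SimpleGraph.dist_comm]
    have := SimpleGraph.dist_le q
    omega
  have h2 : T.dist a w ≤ T.dist a b + T.dist b w := hT.isConnected.dist_triangle
  have h3 : T.dist b w = 1 := (SimpleGraph.dist_eq_one_iff_adj).2 hadj.symm
  omega

/-- In a tree, the ancestor of `w` at a given depth is unique. -/
lemma tree_anc_unique (hT : T.IsTree) (r : V) :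
    ∀ (n : ℕ) {w a₁ a₂ : V}, T.dist a₁ w = n → T.dist r a₁ = T.dist r a₂ →
      T.dist r w = T.dist r a₁ + T.dist a₁ w →
      T.dist r w = T.dist r a₂ + T.dist a₂ w → a₁ = a₂ := by
  intro n
  induction n with
  | zero =>
    intro w a₁ a₂ h1 he hc1 hc2
    have e1 : a₁ = w := (hT.isConnected.dist_eq_zero_iff).1 h1
    have e2 : a₂ = w := (hT.isConnected.dist_eq_zero_iff).1 (by omega)
    rw [e1, e2]
  | succ n ih =>
    intro w a₁ a₂ h1 he hc1 hc2
    have h2 : T.dist a₂ w = n + 1 := by omega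
    obtain ⟨b₁, hb₁, hd₁⟩ := tree_exists_penult hT h1
    obtain ⟨b₂, hb₂, hd₂⟩ := tree_exists_penult hT h2
    have hrb₁ : T.dist r b₁ = T.dist r a₁ + n := by
      have t1 : T.dist r b₁ ≤ T.dist r a₁ + T.dist a₁ b₁ := hT.isConnected.dist_triangle
      have t2 : T.dist r w ≤ T.dist r b₁ + T.dist b₁ w := hT.isConnected.dist_triangle
      have t3 : T.dist b₁ w = 1 := (SimpleGraph.dist_eq_one_iff_adj).2 hb₁
      omega
    have hrb₂ : T.dist r b₂ = T.dist r a₂ + n := by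
      have t1 : T.dist r b₂ ≤ T.dist r a₂ + T.dist a₂ b₂ := hT.isConnected.dist_triangle
      have t2 : T.dist r w ≤ T.dist r b₂ + T.dist b₂ w := hT.isConnected.dist_triangle
      have t3 : T.dist b₂ w = 1 := (SimpleGraph.dist_eq_one_iff_adj).2 hb₂
      omega
    have hb : b₁ = b₂ := tree_unique_parent hT r hb₁ hb₂ (by omega) (by omega)
    exact ih hd₁ he (by omega) (by rw [hb]; omega)

/-- A connected subgraph of a tree contains, for each of its vertices `w` and
each depth `m` between the minimum depth and the depth of `w`, an ancestor of
`w` at depth `m`. -/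
lemma tree_exists_ancestor (hT : T.IsTree) (r : V) (s : Set V)
    (hcon : ∀ x ∈ s, ∀ y ∈ s, ∃ P : T.Walk x y, P.IsPath ∧ ∀ v ∈ P.support, v ∈ s)
    {z : V} (hz : z ∈ s) (hmin : ∀ v ∈ s, T.dist r z ≤ T.dist r v)
    (m : ℕ) (hzm : T.dist r z ≤ m) :
    ∀ n : ℕ, ∀ w ∈ s, T.dist r w ≤ m + n → m ≤ T.dist r w →
      ∃ a ∈ s, T.dist r a = m ∧ T.dist r w = T.dist r a + T.dist a w := by
  intro n
  induction n with
  | zero =>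
    intro w hw hub hlb
    refine ⟨w, hw, by omega, by simp [SimpleGraph.dist_self]⟩
  | succ n ih =>
    intro w hw hub hlb
    by_cases hwm : T.dist r w = m
    · exact ⟨w, hw, hwm, by simp [SimpleGraph.dist_self]⟩
    have hlt : m < T.dist r w := lt_of_le_of_ne hlb (Ne.symm hwm)
    have hwz : w ≠ z := by
      intro he; rw [he] at hlt; omega
    obtain ⟨P, hP, hPs⟩ := hcon w hw z hz
    obtain ⟨c, hadj, Q, hQ⟩ := P.exists_eq_cons_of_ne hwz
    have hc : c ∈ s := by
      apply hPs
      rw [hQ, SimpleGraph.Walk.support_cons]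
      exact List.mem_cons_of_mem _ Q.start_mem_support
    rcases tree_adj_dist_cases hT r hadj with hup | hdown
    · exfalso
      refine tree_up_path_false hT r Q hadj ?_ ?_ hup
      · rw [← hQ]; exact hP
      · have := hmin w hw; omega
    · obtain ⟨a, ha, ham, hanc⟩ := ih c hc (by omega) (by omega)
      refine ⟨a, ha, ham, ?_⟩
      have t1 : T.dist r w ≤ T.dist r a + T.dist a w := hT.isConnected.dist_triangle
      have t2 : T.dist a w ≤ T.dist a c + T.dist c w := hT.isConnected.dist_triangle
      have t3 : T.dist c w = 1 := (SimpleGraph.dist_eq_one_iff_adj).2 hadj.symm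
      omega

/-- The vertex of minimum depth in a connected set is unique. -/
lemma tree_min_unique (hT : T.IsTree) (r : V) (s : Set V)
    (hcon : ∀ x ∈ s, ∀ y ∈ s, ∃ P : T.Walk x y, P.IsPath ∧ ∀ v ∈ P.support, v ∈ s)
    {z₁ z₂ : V} (h₁ : z₁ ∈ s) (h₂ : z₂ ∈ s)
    (hmin : ∀ v ∈ s, T.dist r z₁ ≤ T.dist r v)
    (he : T.dist r z₂ = T.dist r z₁) : z₂ = z₁ := by
  by_contra hne
  obtain ⟨P, hP, hPs⟩ := hcon z₂ h₂ z₁ h₁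
  obtain ⟨c, hadj, Q, hQ⟩ := P.exists_eq_cons_of_ne hne
  have hc : c ∈ s := by
    apply hPs
    rw [hQ, SimpleGraph.Walk.support_cons]
    exact List.mem_cons_of_mem _ Q.start_mem_support
  rcases tree_adj_dist_cases hT r hadj with hup | hdown
  · exact tree_up_path_false hT r Q hadj (by rw [← hQ]; exact hP) (by omega) hup
  · have := hmin c hc; omega

/-- Connectivity of a subgraph gives paths within it. -/
lemma subgraph_conn_path {t : T.Subgraph} (h : t.coe.Connected) :
    ∀ x ∈ t.verts, ∀ y ∈ t.verts, ∃ P : T.Walk x y, P.IsPath ∧ ∀ v ∈ P.support, v ∈ t.verts := by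
  intro x hx y hy
  obtain ⟨W⟩ := h.preconnected ⟨x, hx⟩ ⟨y, hy⟩
  refine ⟨(W.bypass.map t.hom), ?_, ?_⟩
  · exact SimpleGraph.Walk.map_isPath_of_injective Subtype.val_injective W.bypass_isPath
  · intro v hv
    replace hv : v ∈ (W.bypass.map t.hom).support := hv
    rw [SimpleGraph.Walk.support_map] at hv
    obtain ⟨u, _, rfl⟩ := List.mem_map.1 hv
    exact u.2

end TreeAux

/-- For a finite tree `T` and a family `𝒯` of subtrees of `T`, for every
positive `k`, either there are `k` pairwise vertex-disjoint members of `𝒯`, or some set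
`Z` of fewer than `k` vertices meets every member of `𝒯`. -/
theorem subtrees_disjoint_or_transversal (V : Type) [Fintype V] (T : SimpleGraph V)
    (hT : T.IsTree) (𝒯 : Set T.Subgraph) (h𝒯 : ∀ t ∈ 𝒯, t.coe.Connected)
    (k : ℕ) (hk : 0 < k) :
    (∃ f : Fin k → T.Subgraph, (∀ i, f i ∈ 𝒯) ∧
      ∀ i j, i ≠ j → Disjoint (f i).verts (f j).verts) ∨
    (∃ Z : Set V, Z.ncard < k ∧ ∀ t ∈ 𝒯, (t.verts ∩ Z).Nonempty) := by
  induction k generalizing 𝒯 with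
  | zero => exact absurd hk (lt_irrefl 0)
  | succ k ih =>
    by_cases hne : 𝒯.Nonempty
    · obtain ⟨t₁, ht₁⟩ := hne
      obtain ⟨⟨r, hr⟩⟩ := (h𝒯 t₁ ht₁).nonempty
      -- minimum depth of a subtree
      set D : T.Subgraph → ℕ := fun t => sInf (T.dist r '' t.verts) with hD
      have hvne : ∀ t ∈ 𝒯, (T.dist r '' t.verts).Nonempty := by
        intro t ht
        obtain ⟨⟨v, hv⟩⟩ := (h𝒯 t ht).nonempty
        exact ⟨T.dist r v, v, hv, rfl⟩
      have hDmem : ∀ t ∈ 𝒯, ∃ v ∈ t.verts, T.dist r v = D t := by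
        intro t ht
        obtain ⟨v, hv, hvd⟩ := Nat.sInf_mem (hvne t ht)
        exact ⟨v, hv, hvd⟩
      have hDle : ∀ t ∈ 𝒯, ∀ v ∈ t.verts, D t ≤ T.dist r v := by
        intro t ht v hv
        exact Nat.sInf_le ⟨v, hv, rfl⟩
      -- pick a subtree with maximal minimum depth
      have hbdd : BddAbove (D '' 𝒯) := by
        refine ⟨Fintype.card V, ?_⟩
        rintro x ⟨t, ht, rfl⟩
        obtain ⟨v, hv, hvd⟩ := hDmem t ht
        rw [← hvd]
        obtain ⟨p, hp, hl⟩ := hT.isConnected.exists_path_of_dist r v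
        rw [← hl]
        exact le_of_lt hp.length_lt
      have hMmem : sSup (D '' 𝒯) ∈ D '' 𝒯 :=
        Nat.sSup_mem ⟨D t₁, t₁, ht₁, rfl⟩ hbdd
      obtain ⟨t₀, ht₀, hMt₀⟩ := hMmem
      have hmax : ∀ t ∈ 𝒯, D t ≤ D t₀ := by
        intro t ht
        rw [hMt₀]
        exact le_csSup hbdd ⟨t, ht, rfl⟩
      obtain ⟨z, hz, hdz⟩ := hDmem t₀ ht₀
      have hmin₀ : ∀ v ∈ t₀.verts, T.dist r z ≤ T.dist r v := by
        intro v hv; rw [hdz]; exact hDle t₀ ht₀ v hv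
      have hcon₀ := subgraph_conn_path (h𝒯 t₀ ht₀)
      -- key claim: every subtree meeting t₀ contains z
      have key : ∀ t' ∈ 𝒯, (t'.verts ∩ t₀.verts).Nonempty → z ∈ t'.verts := by
        rintro t' ht' ⟨w, hw', hw0⟩
        obtain ⟨x, hx, hdx⟩ := hDmem t' ht'
        have hmin' : ∀ v ∈ t'.verts, T.dist r x ≤ T.dist r v := by
          intro v hv; rw [hdx]; exact hDle t' ht' v hv
        have hcon' := subgraph_conn_path (h𝒯 t' ht')
        have hxz : T.dist r x ≤ T.dist r z := by
          rw [hdx, hdz]; exact hmax t' ht'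
        have hzw : T.dist r z ≤ T.dist r w := hmin₀ w hw0
        obtain ⟨a₀, ha₀, ha₀d, ha₀anc⟩ :=
          tree_exists_ancestor hT r t₀.verts hcon₀ hz hmin₀ (T.dist r z) le_rfl
            (T.dist r w - T.dist r z) w hw0 (by omega) hzw
        obtain ⟨a', ha', ha'd, ha'anc⟩ :=
          tree_exists_ancestor hT r t'.verts hcon' hx hmin' (T.dist r z) hxz
            (T.dist r w - T.dist r z) w hw' (by omega) hzw
        have he0 : a₀ = z := tree_min_unique hT r t₀.verts hcon₀ hz ha₀ hmin₀ ha₀d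
        have he1 : a' = a₀ :=
          tree_anc_unique hT r (T.dist a' w) rfl (by omega) ha'anc (by omega)
        rw [← he0, ← he1]
        exact ha'
      rcases Nat.eq_zero_or_pos k with hk0 | hkpos
      · subst hk0
        left
        refine ⟨fun _ => t₀, fun _ => ht₀, fun i j hij => absurd ?_ hij⟩
        have h1 := i.isLt; have h2 := j.isLt
        exact Fin.ext (by omega)
      · set 𝒯' : Set T.Subgraph := {t ∈ 𝒯 | z ∉ t.verts} with h𝒯'
        rcases ih 𝒯' (fun t ht => h𝒯 t ht.1) hkpos with ⟨f, hf, hdisj⟩ | ⟨Z', hZ', hcov⟩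
        · left
          refine ⟨Fin.cons t₀ f, ?_, ?_⟩
          · intro i
            refine Fin.cases ?_ ?_ i
            · simpa using ht₀
            · intro j; simpa using (hf j).1
          · have hdt : ∀ j : Fin k, Disjoint t₀.verts (f j).verts := by
              intro j
              rw [Set.disjoint_left]
              intro a ha haf
              exact (hf j).2 (key (f j) (hf j).1 ⟨a, haf, ha⟩)
            intro i j hij
            rcases Fin.eq_zero_or_eq_succ i with rfl | ⟨i', rfl⟩ <;>
              rcases Fin.eq_zero_or_eq_succ j with rfl | ⟨j', rfl⟩
            · exact absurd rfl hij
            · simp only [Fin.cons_zero, Fin.cons_succ]; exact hdt j'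
            · simp only [Fin.cons_zero, Fin.cons_succ]; exact (hdt i').symm
            · simp only [Fin.cons_succ]
              exact hdisj i' j' (fun h => hij (by rw [h]))
        · right
          refine ⟨insert z Z', ?_, ?_⟩
          · have := Set.ncard_insert_le z Z'
            omega
          · intro t ht
            by_cases hzt : z ∈ t.verts
            · exact ⟨z, hzt, Set.mem_insert z Z'⟩
            · obtain ⟨w, hw, hwZ⟩ := hcov t ⟨ht, hzt⟩
              exact ⟨w, hw, Set.mem_insert_of_mem z hwZ⟩
    · right
      refine ⟨∅, by simp, ?_⟩
      intro t ht
      exact absurd ⟨t, ht⟩ hne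
end

section
/- There exists a function f(w,k) with the following property: for all positive integers w and k, if G is a graph of tree-width at most w and ℋ is a family of 2-connected subgraphs of G, then either (a) there exist a vertex v of G and members H₁,…,H_k of ℋ such that V(Hᵢ) ∩ V(Hⱼ) ⊆ {v} for all i ≠ j, or (b) there exists a set X ⊆ V(G) with |X| ≤ f(w,k) such that every member of ℋ contains at least two vertices of X. In fact f(w,k) = k(k−1)(w+1)² suffices. -/
open Classical SimpleGraph

/- ====== auxiliary development for Statement 7 ====== -/

section Toolkit

variable {ι : Type} {T : SimpleGraph ι}

/-- The canonical path between two vertices of a connected graph. -/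
noncomputable def tw7pth (hc : T.Connected) (a b : ι) : T.Walk a b :=
  ((hc.preconnected a b).some).bypass

lemma tw7pth_isPath (hc : T.Connected) (a b : ι) : (tw7pth hc a b).IsPath :=
  SimpleGraph.Walk.bypass_isPath _

lemma tw7_eq_pth (hT : T.IsAcyclic) (hc : T.Connected) {a b : ι} {w : T.Walk a b}
    (hw : w.IsPath) : w = tw7pth hc a b := by
  have h2 := hT.path_unique ⟨w, hw⟩ ⟨_, tw7pth_isPath hc a b⟩
  exact congrArg Subtype.val h2

lemma tw7pth_subset (hT : T.IsAcyclic) (hc : T.Connected) {a b : ι} (w : T.Walk a b) :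
    (tw7pth hc a b).support ⊆ w.support := by
  have h := tw7_eq_pth hT hc (SimpleGraph.Walk.bypass_isPath w)
  rw [← h]
  exact SimpleGraph.Walk.support_bypass_subset w

/-- depth of a node from the root `r`. -/
noncomputable def tw7dep (hc : T.Connected) (r x : ι) : ℕ := (tw7pth hc r x).length

lemma tw7_split (hT : T.IsAcyclic) (hc : T.Connected) {a b z : ι}
    (hz : z ∈ (tw7pth hc a b).support) :
    tw7pth hc a b = (tw7pth hc a z).append (tw7pth hc z b) := by
  have h1 : (tw7pth hc a b).takeUntil z hz = tw7pth hc a z :=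
    tw7_eq_pth hT hc ((tw7pth_isPath hc a b).takeUntil hz)
  have h2 : (tw7pth hc a b).dropUntil z hz = tw7pth hc z b :=
    tw7_eq_pth hT hc ((tw7pth_isPath hc a b).dropUntil hz)
  rw [← h1, ← h2, SimpleGraph.Walk.take_spec]

lemma tw7_dep_lt (hT : T.IsAcyclic) (hc : T.Connected) (r : ι) {x z : ι}
    (hz : z ∈ (tw7pth hc r x).support) (hne : z ≠ x) :
    tw7dep hc r z < tw7dep hc r x := by
  have h := congrArg SimpleGraph.Walk.length (tw7_split hT hc hz)
  rw [SimpleGraph.Walk.length_append] at h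
  have hpos : (tw7pth hc z x).length ≠ 0 := by
    intro h0
    exact hne (SimpleGraph.Walk.eq_of_length_eq_zero h0)
  unfold tw7dep
  omega

lemma tw7_adj_dep (hT : T.IsAcyclic) (hc : T.Connected) (r : ι) {x y : ι} (h : T.Adj x y) :
    (tw7dep hc r y = tw7dep hc r x + 1 ∧
      (tw7pth hc r y).support = (tw7pth hc r x).support ++ [y]) ∨
    (tw7dep hc r x = tw7dep hc r y + 1 ∧
      (tw7pth hc r x).support = (tw7pth hc r y).support ++ [x]) := by
  by_cases hy : y ∈ (tw7pth hc r x).support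
  · right
    have hsplit := tw7_split hT hc hy
    have hedge : (SimpleGraph.Walk.cons h.symm SimpleGraph.Walk.nil : T.Walk y x).IsPath := by
      simp [SimpleGraph.Walk.isPath_def, h.ne']
    have hyx : tw7pth hc y x = SimpleGraph.Walk.cons h.symm SimpleGraph.Walk.nil :=
      (tw7_eq_pth hT hc hedge).symm
    constructor
    · have hlen := congrArg SimpleGraph.Walk.length hsplit
      rw [SimpleGraph.Walk.length_append, hyx] at hlen
      simp only [SimpleGraph.Walk.length_cons, SimpleGraph.Walk.length_nil] at hlen
      unfold tw7dep
      omega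
    · rw [hsplit, SimpleGraph.Walk.support_append, hyx]
      simp
  · left
    have hconc : ((tw7pth hc r x).concat h).IsPath := by
      rw [SimpleGraph.Walk.isPath_def, SimpleGraph.Walk.support_concat]
      refine List.Nodup.append ((tw7pth_isPath hc r x).support_nodup) (List.nodup_singleton _) ?_
      intro z hz hz'
      rw [List.mem_singleton] at hz'
      subst hz'
      exact hy hz
    have heq := tw7_eq_pth hT hc hconc
    constructor
    · have := congrArg SimpleGraph.Walk.length heq
      rw [SimpleGraph.Walk.length_concat] at this
      unfold tw7dep
      omega
    · rw [← heq, SimpleGraph.Walk.support_concat]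

lemma tw7_po (hT : T.IsAcyclic) (hc : T.Connected) (r : ι) {b t' x : ι}
    (ht' : t' ∈ (tw7pth hc r b).support) (hx : x ∈ (tw7pth hc r b).support)
    (hdep : tw7dep hc r t' ≤ tw7dep hc r x) (hne : x ≠ t') :
    x ∈ (tw7pth hc t' b).support := by
  have hsplit := tw7_split hT hc ht'
  rw [hsplit, SimpleGraph.Walk.mem_support_append_iff] at hx
  rcases hx with hx | hx
  · exact absurd (tw7_dep_lt hT hc r hx hne) (by omega)
  · exact hx

lemma tw7_top [Finite ι] (hT : T.IsAcyclic) (hc : T.Connected) (r : ι) {S : Set ι}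
    (hne : S.Nonempty) (hsub : ∀ a ∈ S, ∀ b ∈ S, ∀ z ∈ (tw7pth hc a b).support, z ∈ S) :
    ∃ t₁ ∈ S, ∀ x ∈ S, t₁ ∈ (tw7pth hc r x).support := by
  obtain ⟨t₁, ht₁, hmin⟩ := Set.exists_min_image S (tw7dep hc r) S.toFinite hne
  refine ⟨t₁, ht₁, ?_⟩
  have key : ∀ n, ∀ x, x ∈ S → (tw7pth hc t₁ x).length = n →
      t₁ ∈ (tw7pth hc r x).support := by
    intro n
    induction n with
    | zero =>
      intro x _ hlen
      have : t₁ = x := SimpleGraph.Walk.eq_of_length_eq_zero hlen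
      subst this
      exact SimpleGraph.Walk.end_mem_support _
    | succ n ih =>
      intro x hx hlen
      have hrev : (tw7pth hc t₁ x).reverse = tw7pth hc x t₁ :=
        tw7_eq_pth hT hc ((tw7pth_isPath hc t₁ x).reverse)
      have hlen' : (tw7pth hc x t₁).length = n + 1 := by
        rw [← hrev, SimpleGraph.Walk.length_reverse, hlen]
      have hnotnil : ¬ (tw7pth hc x t₁).Nil := by
        rw [SimpleGraph.Walk.nil_iff_length_eq, hlen']
        omega
      obtain ⟨y, hadj, q, hq⟩ := SimpleGraph.Walk.not_nil_iff.mp hnotnil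
      have hqpath : q.IsPath := by
        have hp := tw7pth_isPath hc x t₁
        rw [hq] at hp
        exact hp.of_cons
      have hqy : q.reverse = tw7pth hc t₁ y := tw7_eq_pth hT hc hqpath.reverse
      have hyS : y ∈ S := by
        have hy' : y ∈ (tw7pth hc x t₁).support := by
          rw [hq, SimpleGraph.Walk.support_cons]
          exact List.mem_cons_of_mem _ (SimpleGraph.Walk.start_mem_support q)
        exact hsub x hx t₁ ht₁ y hy'
      have hylen : (tw7pth hc t₁ y).length = n := by
        have : (tw7pth hc x t₁).length = q.length + 1 := by
          rw [hq, SimpleGraph.Walk.length_cons]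
        rw [← hqy, SimpleGraph.Walk.length_reverse]
        omega
      have hin := ih y hyS hylen
      rcases tw7_adj_dep hT hc r hadj with ⟨hd, hs⟩ | ⟨hd, hs⟩
      · rw [hs] at hin
        rcases List.mem_append.mp hin with h1 | h1
        · exact h1
        · rw [List.mem_singleton] at h1
          subst h1
          have := hmin x hx
          omega
      · rw [hs]
        exact List.mem_append_left _ hin
  intro x hx
  exact key _ x hx rfl

end Toolkit

section Graph

/-- Walks in an induced subgraph give walks in the big graph with controlled support. -/
lemma tw7_induce_walk {ι : Type} {T : SimpleGraph ι} {s : Set ι} :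
    ∀ {a b : ↥s} (_ : (T.induce s).Walk a b), ∃ p : T.Walk ↑a ↑b, ∀ z ∈ p.support, z ∈ s := by
  intro a b w
  induction w with
  | nil => exact ⟨SimpleGraph.Walk.nil, by simpa using a.2⟩
  | @cons u c b h q ih =>
    obtain ⟨p, hp⟩ := ih
    have hadj : T.Adj ↑u ↑c := h
    refine ⟨SimpleGraph.Walk.cons hadj p, ?_⟩
    intro z hz
    rw [SimpleGraph.Walk.support_cons] at hz
    rcases List.mem_cons.mp hz with rfl | hz
    · exact u.2
    · exact hp z hz

variable {V : Type} [Fintype V] {G : SimpleGraph V}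
variable {ι : Type} [Fintype ι] {T : SimpleGraph ι} {β : ι → Set V}

/-- Node sets of the tree-decomposition whose bag contains ≥ 2 vertices of H. -/
def tw7TH (β : ι → Set V) (H : G.Subgraph) : Set ι := {t | 2 ≤ ((β t) ∩ H.verts).ncard}

lemma tw7_Tv (hT : T.IsAcyclic) (hc : T.Connected)
    (hConn : ∀ v : V, (T.induce {t | v ∈ β t}).Connected)
    (v : V) {a b : ι} (ha : v ∈ β a) (hb : v ∈ β b) :
    ∀ z ∈ (tw7pth hc a b).support, v ∈ β z := by
  obtain ⟨w⟩ := (hConn v).preconnected ⟨a, ha⟩ ⟨b, hb⟩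
  obtain ⟨p, hp⟩ := tw7_induce_walk w
  intro z hz
  exact hp z (tw7pth_subset hT hc p hz)

lemma tw7_mem_bag (hConn : ∀ v : V, (T.induce {t | v ∈ β t}).Connected) (v : V) :
    ∃ t, v ∈ β t := by
  obtain ⟨t⟩ := (hConn v).nonempty
  exact ⟨t, t.2⟩

lemma tw7_card3 {H : G.Subgraph} (h2 : TwoConnected H.coe) : 3 ≤ H.verts.ncard := by
  have := h2.1
  rw [Nat.card_coe_set_eq] at this
  omega

/-- every vertex of a 2-connected subgraph has a neighbour in it -/
lemma tw7_exists_adj {H : G.Subgraph} (h2 : TwoConnected H.coe) {u : V} (hu : u ∈ H.verts) :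
    ∃ u', H.Adj u u' := by
  have h3 := tw7_card3 h2
  -- find v ∈ verts, v ≠ u
  have h1 : (H.verts \ {u}).Nonempty := by
    apply Set.nonempty_of_ncard_ne_zero
    have := Set.ncard_le_ncard_diff_add_ncard H.verts {u} (Set.toFinite _)
    simp only [Set.ncard_singleton] at this
    omega
  obtain ⟨v, hv, hvu⟩ := h1
  rw [Set.mem_singleton_iff] at hvu
  -- find z ∈ verts, z ∉ {u, v}
  have h2' : (H.verts \ {u, v}).Nonempty := by
    apply Set.nonempty_of_ncard_ne_zero
    have := Set.ncard_le_ncard_diff_add_ncard H.verts {u, v} (Set.toFinite _)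
    have hle : ({u, v} : Set V).ncard ≤ 2 := by
      apply le_trans (Set.ncard_insert_le _ _)
      simp
    omega
  obtain ⟨z, hz, hzuv⟩ := h2'
  simp only [Set.mem_insert_iff, Set.mem_singleton_iff, not_or] at hzuv
  have hcon := h2.2 ⟨v, hv⟩
  have hpu : (⟨u, hu⟩ : ↥H.verts) ∈ {x : ↥H.verts | x ≠ ⟨v, hv⟩} := by
    simp only [Set.mem_setOf_eq, ne_eq]
    intro h; exact hvu (congrArg Subtype.val h).symm
  have hpz : (⟨z, hz⟩ : ↥H.verts) ∈ {x : ↥H.verts | x ≠ ⟨v, hv⟩} := by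
    simp only [Set.mem_setOf_eq, ne_eq]
    intro h; exact hzuv.2 (congrArg Subtype.val h)
  obtain ⟨w⟩ := hcon.preconnected ⟨⟨u, hu⟩, hpu⟩ ⟨⟨z, hz⟩, hpz⟩
  have hne : (⟨⟨u, hu⟩, hpu⟩ : ↥{x : ↥H.verts | x ≠ ⟨v, hv⟩}) ≠ ⟨⟨z, hz⟩, hpz⟩ := by
    intro h
    apply hzuv.1
    have h2 := congrArg (fun (a : ↥{x : ↥H.verts | x ≠ (⟨v, hv⟩ : ↥H.verts)}) => ((a : ↥H.verts) : V)) h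
    exact h2.symm
  have hnotnil : ¬ w.Nil := SimpleGraph.Walk.not_nil_of_ne hne
  obtain ⟨c, hadj, q, hq⟩ := SimpleGraph.Walk.not_nil_iff.mp hnotnil
  have : H.coe.Adj ⟨u, hu⟩ ↑c := hadj
  rw [SimpleGraph.Subgraph.coe_adj] at this
  exact ⟨_, this⟩

lemma tw7_L5 (hEdge : ∀ u v : V, G.Adj u v → ∃ t : ι, u ∈ β t ∧ v ∈ β t)
    {H : G.Subgraph} (h2 : TwoConnected H.coe) {u : V} (hu : u ∈ H.verts) :
    ∃ t, t ∈ tw7TH β H ∧ u ∈ β t := by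
  obtain ⟨u', hadj⟩ := tw7_exists_adj h2 hu
  obtain ⟨t, ht, ht'⟩ := hEdge u u' (hadj.adj_sub)
  refine ⟨t, ?_, ht⟩
  have hne : u ≠ u' := (hadj.adj_sub).ne
  have hu' : u' ∈ H.verts := H.edge_vert hadj.symm
  have hsub : ({u, u'} : Set V) ⊆ β t ∩ H.verts := by
    intro z hz
    rcases hz with rfl | hz
    · exact ⟨ht, hu⟩
    · rw [Set.mem_singleton_iff] at hz; subst hz; exact ⟨ht', hu'⟩
  calc 2 = ({u, u'} : Set V).ncard := (Set.ncard_pair hne).symm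
    _ ≤ _ := Set.ncard_le_ncard hsub (Set.toFinite _)

lemma tw7_TH_nonempty (hEdge : ∀ u v : V, G.Adj u v → ∃ t : ι, u ∈ β t ∧ v ∈ β t)
    {H : G.Subgraph} (h2 : TwoConnected H.coe) : (tw7TH β H).Nonempty := by
  have h3 := tw7_card3 h2
  have : H.verts.Nonempty := by
    apply Set.nonempty_of_ncard_ne_zero; omega
  obtain ⟨u, hu⟩ := this
  obtain ⟨t, ht, _⟩ := tw7_L5 hEdge h2 hu
  exact ⟨t, ht⟩

end Graph

section Graph2
variable {V : Type} [Fintype V] {G : SimpleGraph V}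
variable {ι : Type} [Fintype ι] {T : SimpleGraph ι} {β : ι → Set V}

lemma tw7_TH_subtree (hT : T.IsAcyclic) (hc : T.Connected)
    (hEdge : ∀ u v : V, G.Adj u v → ∃ t : ι, u ∈ β t ∧ v ∈ β t)
    (hConn : ∀ v : V, (T.induce {t | v ∈ β t}).Connected)
    {H : G.Subgraph} (h2 : TwoConnected H.coe) :
    ∀ a ∈ tw7TH β H, ∀ b ∈ tw7TH β H, ∀ t ∈ (tw7pth hc a b).support, t ∈ tw7TH β H := by
  intro a ha b hb t ht
  by_contra htn
  have hA1 : (β t ∩ H.verts).ncard ≤ 1 := by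
    unfold tw7TH at htn
    rw [Set.mem_setOf_eq] at htn
    omega
  have hua : ∃ u, (u ∈ β a ∧ u ∈ H.verts) ∧ u ∉ β t := by
    by_contra hcon
    push_neg at hcon
    have hsub : β a ∩ H.verts ⊆ β t ∩ H.verts := by
      rintro u ⟨h1, h2'⟩
      exact ⟨hcon u ⟨h1, h2'⟩, h2'⟩
    have hle := Set.ncard_le_ncard hsub (Set.toFinite _)
    have ha2 : 2 ≤ (β a ∩ H.verts).ncard := ha
    omega
  obtain ⟨ua, ⟨hua1, hua2⟩, hua3⟩ := hua
  have hub : ∃ u, (u ∈ β b ∧ u ∈ H.verts) ∧ u ∉ β t := by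
    by_contra hcon
    push_neg at hcon
    have hsub : β b ∩ H.verts ⊆ β t ∩ H.verts := by
      rintro u ⟨h1, h2'⟩
      exact ⟨hcon u ⟨h1, h2'⟩, h2'⟩
    have hle := Set.ncard_le_ncard hsub (Set.toFinite _)
    have hb2 : 2 ≤ (β b ∩ H.verts).ncard := hb
    omega
  obtain ⟨ub, ⟨hub1, hub2⟩, hub3⟩ := hub
  by_cases heq : ua = ub
  · subst heq
    exact hua3 (tw7_Tv hT hc hConn ua hua1 hub1 t ht)
  -- choose the vertex x to delete
  have hx : ∃ x, ∃ _ : x ∈ H.verts, (β t ∩ H.verts) ⊆ {x} ∧ x ≠ ua ∧ x ≠ ub := by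
    rcases (β t ∩ H.verts).eq_empty_or_nonempty with hA | hA
    · have h3 := tw7_card3 h2
      have hdn : (H.verts \ {ua, ub}).Nonempty := by
        apply Set.nonempty_of_ncard_ne_zero
        have hd := Set.ncard_le_ncard_diff_add_ncard H.verts {ua, ub} (Set.toFinite _)
        have hle : ({ua, ub} : Set V).ncard ≤ 2 := by
          apply le_trans (Set.ncard_insert_le _ _); simp
        omega
      obtain ⟨x, hxv, hxn⟩ := hdn
      simp only [Set.mem_insert_iff, Set.mem_singleton_iff, not_or] at hxn
      exact ⟨x, hxv, by rw [hA]; exact Set.empty_subset _, hxn.1, hxn.2⟩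
    · obtain ⟨x, hxA⟩ := hA
      refine ⟨x, hxA.2, ?_, ?_, ?_⟩
      · intro z hz
        have hzx : z = x := (Set.ncard_le_one (Set.toFinite _)).mp hA1 z hz x hxA
        simp [hzx]
      · intro h; exact hua3 (h ▸ hxA.1)
      · intro h; exact hub3 (h ▸ hxA.1)
  obtain ⟨x, hxv, hxsub, hxa, hxb⟩ := hx
  have hnotin : ∀ z : V, z ∈ H.verts → z ≠ x → z ∉ β t := by
    intro z hzv hzx hzt
    exact hzx (hxsub ⟨hzt, hzv⟩)
  have hcon := h2.2 ⟨x, hxv⟩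
  have hpa : (⟨ua, hua2⟩ : ↥H.verts) ∈ {z : ↥H.verts | z ≠ (⟨x, hxv⟩ : ↥H.verts)} := by
    simp only [Set.mem_setOf_eq, ne_eq, Subtype.mk.injEq]
    intro h; exact hxa h.symm
  have hpb : (⟨ub, hub2⟩ : ↥H.verts) ∈ {z : ↥H.verts | z ≠ (⟨x, hxv⟩ : ↥H.verts)} := by
    simp only [Set.mem_setOf_eq, ne_eq, Subtype.mk.injEq]
    intro h; exact hxb h.symm
  have chain : ∀ (p q : ↥{z : ↥H.verts | z ≠ (⟨x, hxv⟩ : ↥H.verts)})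
      (_ : (H.coe.induce {z : ↥H.verts | z ≠ (⟨x, hxv⟩ : ↥H.verts)}).Walk p q),
      ∃ s s' : ι, ∃ w' : T.Walk s s',
        ((p : ↥H.verts) : V) ∈ β s ∧ ((q : ↥H.verts) : V) ∈ β s' ∧ t ∉ w'.support := by
    intro p q w
    have hptx : ∀ (p : ↥{z : ↥H.verts | z ≠ (⟨x, hxv⟩ : ↥H.verts)}),
        ((p : ↥H.verts) : V) ∉ β t := by
      intro p'
      apply hnotin _ (p' : ↥H.verts).2
      intro h
      exact p'.2 (Subtype.ext h)
    induction w with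
    | @nil u =>
      obtain ⟨s, hs⟩ := tw7_mem_bag hConn ((u : ↥H.verts) : V)
      refine ⟨s, s, SimpleGraph.Walk.nil, hs, hs, ?_⟩
      rw [SimpleGraph.Walk.support_nil, List.mem_singleton]
      intro h
      exact hptx u (h ▸ hs)
    | @cons p' c q' h qw ih =>
      obtain ⟨s1, s', w1, hc1, hq', hw1⟩ := ih
      have hadj : H.Adj ((p' : ↥H.verts) : V) ((c : ↥H.verts) : V) := by
        have h' : H.coe.Adj ↑p' ↑c := h
        rwa [SimpleGraph.Subgraph.coe_adj] at h'
      obtain ⟨s0, hs0, hs0'⟩ := hEdge _ _ hadj.adj_sub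
      have hmid := tw7_Tv hT hc hConn ((c : ↥H.verts) : V) hs0' hc1
      refine ⟨s0, s', (tw7pth hc s0 s1).append w1, hs0, hq', ?_⟩
      rw [SimpleGraph.Walk.mem_support_append_iff]
      rintro (hmem | hmem)
      · exact hptx c (hmid t hmem)
      · exact hw1 hmem
  obtain ⟨w⟩ := hcon.preconnected ⟨⟨ua, hua2⟩, hpa⟩ ⟨⟨ub, hub2⟩, hpb⟩
  obtain ⟨s, s', w', hs, hs', hw'⟩ := chain _ _ w
  have hfin : t ∉ ((tw7pth hc a s).append (w'.append (tw7pth hc s' b))).support := by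
    rw [SimpleGraph.Walk.mem_support_append_iff, SimpleGraph.Walk.mem_support_append_iff]
    rintro (hmem | hmem | hmem)
    · exact hua3 (tw7_Tv hT hc hConn ua hua1 hs t hmem)
    · exact hw' hmem
    · exact hub3 (tw7_Tv hT hc hConn ub hs' hub1 t hmem)
  exact hfin (tw7pth_subset hT hc _ ht)

end Graph2

/-- For a graph `G` of tree-width at most `w` and a family `ℋ` of
2-connected subgraphs of `G`, either `k` members of `ℋ` pairwise meet in at most one
common vertex `v`, or a set `X` of at most `k(k-1)(w+1)²` vertices meets every member
of `ℋ` in at least two vertices. -/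
theorem twoConnected_families_in_bounded_treewidth (w k : ℕ) (hw : 0 < w) (hk : 0 < k)
    (V : Type) [Fintype V] (G : SimpleGraph V) (hG : HasTreewidthLE G w)
    (ℋ : Set G.Subgraph) (h2c : ∀ H ∈ ℋ, TwoConnected H.coe) :
    (∃ (v : V) (H : Fin k → G.Subgraph), (∀ i, H i ∈ ℋ) ∧
      ∀ i j, i ≠ j → (H i).verts ∩ (H j).verts ⊆ {v}) ∨
    (∃ X : Set V, X.ncard ≤ k * (k - 1) * (w + 1) ^ 2 ∧
      ∀ H ∈ ℋ, 2 ≤ (H.verts ∩ X).ncard) := by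

  classical
  obtain ⟨ι, hι, T, β, hTree, hEdge, hConn, hBag⟩ := hG
  haveI := hι
  have hc : T.Connected := hTree.isConnected
  have hac : T.IsAcyclic := hTree.IsAcyclic
  haveI : Nonempty ι := hc.nonempty
  let r : ι := Classical.arbitrary ι
  -- the top node of the subtree of each member
  have htopex : ∀ H : G.Subgraph, H ∈ ℋ → ∃ t₁, t₁ ∈ tw7TH β H ∧
      ∀ x ∈ tw7TH β H, t₁ ∈ (tw7pth hc r x).support := by
    intro H hH
    obtain ⟨t₁, h1, h2⟩ := tw7_top hac hc r (tw7_TH_nonempty hEdge (h2c H hH))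
      (tw7_TH_subtree hac hc hEdge hConn (h2c H hH))
    exact ⟨t₁, h1, h2⟩
  choose! top htopspec using htopex
  -- finiteness of subgraphs
  haveI hfinsub : Finite G.Subgraph := by
    apply Finite.of_injective (fun H : G.Subgraph => (H.verts, H.Adj))
    intro H1 H2 h
    exact SimpleGraph.Subgraph.ext (congrArg Prod.fst h) (congrArg Prod.snd h)
  let ℱ₀ : Finset G.Subgraph := (Set.toFinite ℋ).toFinset
  have hℱ₀ : ∀ H : G.Subgraph, H ∈ ℱ₀ ↔ H ∈ ℋ := fun H => Set.Finite.mem_toFinset _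
  -- the key geometric pair lemma
  have pairkey : ∀ A, A ∈ ℋ → ∀ B, B ∈ ℋ → tw7TH β A ∩ tw7TH β B = ∅ →
      tw7dep hc r (top B) ≤ tw7dep hc r (top A) → A.verts ∩ B.verts ⊆ β (top A) := by
    intro A hA B hB hdis hdep v hv
    obtain ⟨a, haTH, hva⟩ := tw7_L5 hEdge (h2c A hA) hv.1
    obtain ⟨b, hbTH, hvb⟩ := tw7_L5 hEdge (h2c B hB) hv.2
    have hbtw1 : top A ∈ (tw7pth hc r a).support := (htopspec A hA).2 a haTH
    have htri := tw7pth_subset hac hc ((tw7pth hc r b).append (tw7pth hc b a)) hbtw1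
    rw [SimpleGraph.Walk.mem_support_append_iff] at htri
    rcases htri with hcase | hcase
    · exfalso
      have hbtwB : top B ∈ (tw7pth hc r b).support := (htopspec B hB).2 b hbTH
      by_cases heq : top A = top B
      · rw [Set.eq_empty_iff_forall_notMem] at hdis
        exact hdis (top A) ⟨(htopspec A hA).1, heq ▸ (htopspec B hB).1⟩
      · have hmem := tw7_po hac hc r hbtwB hcase hdep heq
        have hin : top A ∈ tw7TH β B :=
          tw7_TH_subtree hac hc hEdge hConn (h2c B hB) (top B) ((htopspec B hB).1)
            b hbTH (top A) hmem
        rw [Set.eq_empty_iff_forall_notMem] at hdis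
        exact hdis (top A) ⟨(htopspec A hA).1, hin⟩
    · exact tw7_Tv hac hc hConn v hvb hva (top A) hcase
  -- pairwise small intersections for subtree-disjoint members
  have onesided : ∀ A, A ∈ ℋ → ∀ B, B ∈ ℋ → tw7TH β A ∩ tw7TH β B = ∅ →
      tw7dep hc r (top B) ≤ tw7dep hc r (top A) → (A.verts ∩ B.verts).ncard ≤ 1 := by
    intro A hA B hB hdis hdep
    have hsub := pairkey A hA B hB hdis hdep
    rw [Set.ncard_le_one (Set.toFinite _)]
    intro u hu v hv
    by_contra hne
    have hpair : ({u, v} : Set V) ⊆ β (top A) ∩ B.verts := by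
      intro z hz
      rcases hz with rfl | hz
      · exact ⟨hsub hu, hu.2⟩
      · rw [Set.mem_singleton_iff] at hz; subst hz; exact ⟨hsub hv, hv.2⟩
    have h2le : 2 ≤ (β (top A) ∩ B.verts).ncard := by
      calc 2 = ({u, v} : Set V).ncard := (Set.ncard_pair hne).symm
        _ ≤ _ := Set.ncard_le_ncard hpair (Set.toFinite _)
    rw [Set.eq_empty_iff_forall_notMem] at hdis
    exact hdis (top A) ⟨(htopspec A hA).1, h2le⟩
  have pairsmall : ∀ A, A ∈ ℋ → ∀ B, B ∈ ℋ → tw7TH β A ∩ tw7TH β B = ∅ →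
      (A.verts ∩ B.verts).ncard ≤ 1 := by
    intro A hA B hB hdis
    rcases le_total (tw7dep hc r (top B)) (tw7dep hc r (top A)) with hle | hle
    · exact onesided A hA B hB hdis hle
    · rw [Set.inter_comm]
      exact onesided B hB A hA (by rw [Set.inter_comm]; exact hdis) hle
  -- Phase 1 : greedy hitting set with subtree-disjoint witnesses
  have phase1 : ∀ n (ℱ : Finset G.Subgraph), ℱ.card ≤ n → (∀ H ∈ ℱ, H ∈ ℋ) →
      ∃ D : Finset G.Subgraph, (∀ H ∈ D, H ∈ ℱ) ∧
        (∀ H ∈ ℱ, ∃ H' ∈ D, top H' ∈ tw7TH β H) ∧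
        (∀ A ∈ D, ∀ B ∈ D, A ≠ B → tw7TH β A ∩ tw7TH β B = ∅) := by
    intro n
    induction n with
    | zero =>
      intro ℱ hcard _
      have : ℱ = ∅ := Finset.card_eq_zero.mp (Nat.le_zero.mp hcard)
      subst this
      exact ⟨∅, by simp, by simp, by simp⟩
    | succ n ih =>
      intro ℱ hcard hsub
      rcases Finset.eq_empty_or_nonempty ℱ with rfl | hne
      · exact ⟨∅, by simp, by simp, by simp⟩
      · obtain ⟨H₁, hH₁, hmax⟩ := Finset.exists_max_image ℱ (fun H => tw7dep hc r (top H)) hne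
        have hH₁TH : top H₁ ∈ tw7TH β H₁ := (htopspec H₁ (hsub H₁ hH₁)).1
        set ℱ' := ℱ.filter (fun H => top H₁ ∉ tw7TH β H) with hℱ'
        have hssub : ℱ' ⊆ ℱ := Finset.filter_subset _ _
        have hcard' : ℱ'.card ≤ n := by
          have hlt : ℱ'.card < ℱ.card := by
            apply Finset.card_lt_card
            rw [Finset.ssubset_iff_of_subset hssub]
            exact ⟨H₁, hH₁, by simp [hℱ', Finset.mem_filter, hH₁TH]⟩
          omega
        obtain ⟨D', hD'sub, hhit', hdisj'⟩ := ih ℱ' hcard' (fun H hH => hsub H (hssub hH))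
        have key : ∀ B ∈ D', tw7TH β H₁ ∩ tw7TH β B = ∅ := by
          intro B hBD'
          have hBℱ' := hD'sub _ hBD'
          have hBfil := Finset.mem_filter.mp hBℱ'
          have hBℋ : B ∈ ℋ := hsub B (hssub hBℱ')
          rw [Set.eq_empty_iff_forall_notMem]
          rintro u ⟨hu1, huB⟩
          have hb1 : top H₁ ∈ (tw7pth hc r u).support := (htopspec H₁ (hsub H₁ hH₁)).2 u hu1
          have hbB : top B ∈ (tw7pth hc r u).support := (htopspec B hBℋ).2 u huB
          by_cases heq : top H₁ = top B
          · exact hBfil.2 (heq ▸ (htopspec B hBℋ).1)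
          · have hdep : tw7dep hc r (top B) ≤ tw7dep hc r (top H₁) := hmax B (hssub hBℱ')
            have hmem := tw7_po hac hc r hbB hb1 hdep heq
            exact hBfil.2 (tw7_TH_subtree hac hc hEdge hConn (h2c B hBℋ) (top B)
              ((htopspec B hBℋ).1) u huB (top H₁) hmem)
        refine ⟨insert H₁ D', ?_, ?_, ?_⟩
        · intro H hH
          rcases Finset.mem_insert.mp hH with rfl | hH
          exacts [hH₁, hssub (hD'sub _ hH)]
        · intro H hH
          by_cases hcase : top H₁ ∈ tw7TH β H
          · exact ⟨H₁, Finset.mem_insert_self _ _, hcase⟩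
          · obtain ⟨H', h1, h2⟩ := hhit' H (Finset.mem_filter.mpr ⟨hH, hcase⟩)
            exact ⟨H', Finset.mem_insert_of_mem h1, h2⟩
        · intro A hA B hB hAB
          rcases Finset.mem_insert.mp hA with rfl | hA' <;>
            rcases Finset.mem_insert.mp hB with rfl | hB'
          · exact absurd rfl hAB
          · exact key B hB'
          · rw [Set.inter_comm]; exact key A hA'
          · exact hdisj' A hA' B hB' hAB
  obtain ⟨D, hDsub, hhit, hdisj⟩ := phase1 ℱ₀.card ℱ₀ le_rfl (fun H hH => (hℱ₀ H).mp hH)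
  have hDℋ : ∀ H ∈ D, H ∈ ℋ := fun H hH => (hℱ₀ H).mp (hDsub H hH)
  by_cases hsize : D.card ≤ k * (k - 1) * (w + 1)
  · -- small witness family: build the hitting set X
    right
    set XF : Finset V := D.biUnion (fun H => (β (top H)).toFinset) with hXF
    refine ⟨(XF : Set V), ?_, ?_⟩
    · rw [Set.ncard_coe_finset]
      have h1 : XF.card ≤ ∑ H ∈ D, (β (top H)).toFinset.card := Finset.card_biUnion_le
      have h2 : ∑ H ∈ D, (β (top H)).toFinset.card ≤ D.card * (w + 1) := by
        apply Finset.sum_le_card_nsmul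
        intro H _
        rw [← Set.ncard_eq_toFinset_card']
        exact hBag _
      have h3 : D.card * (w + 1) ≤ k * (k - 1) * (w + 1) * (w + 1) :=
        Nat.mul_le_mul_right _ hsize
      have h4 : k * (k - 1) * (w + 1) * (w + 1) = k * (k - 1) * (w + 1) ^ 2 := by ring
      omega
    · intro H hH
      obtain ⟨H', hH'D, htH⟩ := hhit H ((hℱ₀ H).mpr hH)
      have h2le : 2 ≤ (β (top H') ∩ H.verts).ncard := htH
      have hsubX : β (top H') ∩ H.verts ⊆ H.verts ∩ (XF : Set V) := by
        rintro z ⟨hz1, hz2⟩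
        refine ⟨hz2, ?_⟩
        rw [Finset.mem_coe, hXF, Finset.mem_biUnion]
        exact ⟨H', hH'D, Set.mem_toFinset.mpr hz1⟩
      calc 2 ≤ (β (top H') ∩ H.verts).ncard := h2le
        _ ≤ _ := Set.ncard_le_ncard hsubX (Set.toFinite _)
  · -- large witness family : find a flower
    left
    have hDbig : k * (k - 1) * (w + 1) + 1 ≤ D.card := by omega
    -- helper to build the flower from a suitable k-subset
    have flower : ∀ (E' : Finset G.Subgraph) (v : V), E'.card = k → (∀ H ∈ E', H ∈ ℋ) →
        (∀ A ∈ E', ∀ B ∈ E', A ≠ B → A.verts ∩ B.verts ⊆ {v}) →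
        ∃ (v : V) (Hf : Fin k → G.Subgraph), (∀ i, Hf i ∈ ℋ) ∧
          ∀ i j, i ≠ j → (Hf i).verts ∩ (Hf j).verts ⊆ {v} := by
      intro E' v hcard hmem hpair
      have hcards : k = Fintype.card ↥E' := by rw [Fintype.card_coe, hcard]
      let e : ↥E' ≃ Fin (Fintype.card ↥E') := Fintype.equivFin ↥E'
      refine ⟨v, fun i => ↑(e.symm (Fin.cast hcards i)), fun i => hmem _ (e.symm _).2, ?_⟩
      intro i j hij
      apply hpair _ (e.symm _).2 _ (e.symm _).2
      intro heq
      apply hij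
      have h1 : e.symm (Fin.cast hcards i) = e.symm (Fin.cast hcards j) := Subtype.ext heq
      have h2 := e.symm.injective h1
      exact Fin.ext (by simpa using congrArg Fin.val h2)
    by_cases heavy : ∃ v : V, k ≤ (D.filter (fun H => v ∈ H.verts)).card
    · obtain ⟨v, hv⟩ := heavy
      obtain ⟨E', hE'sub, hE'card⟩ := Finset.exists_subset_card_eq hv
      have hE'D : ∀ H ∈ E', H ∈ D := fun H hH => Finset.filter_subset _ _ (hE'sub hH)
      refine flower E' v hE'card (fun H hH => hDℋ H (hE'D H hH)) ?_
      intro A hA B hB hAB u hu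
      have hvA : v ∈ A.verts := (Finset.mem_filter.mp (hE'sub hA)).2
      have hvB : v ∈ B.verts := (Finset.mem_filter.mp (hE'sub hB)).2
      have hsmall := pairsmall A (hDℋ A (hE'D A hA)) B (hDℋ B (hE'D B hB))
        (hdisj A (hE'D A hA) B (hE'D B hB) hAB)
      have : u = v := (Set.ncard_le_one (Set.toFinite _)).mp hsmall u hu v ⟨hvA, hvB⟩
      simp [this]
    · push_neg at heavy
      -- every vertex is in at most k-1 members of D
      have hheavy : ∀ v : V, (D.filter (fun H => v ∈ H.verts)).card ≤ k - 1 := by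
        intro v
        have := heavy v
        omega
      set a : ℕ := (k - 2) * (w + 1) with hadef
      set c : ℕ := a + 1 with hcdef
      -- Phase 2 : extract pairwise vertex-disjoint members
      have extract : ∀ n (E : Finset G.Subgraph), (∀ H ∈ E, H ∈ D) → n * c < E.card + c →
          ∃ E' : Finset G.Subgraph, (∀ H ∈ E', H ∈ E) ∧ E'.card = n ∧
            (∀ A ∈ E', ∀ B ∈ E', A ≠ B → A.verts ∩ B.verts = ∅) := by
        intro n
        induction n with
        | zero => intro E _ _; exact ⟨∅, by simp, by simp, by simp⟩
        | succ n ih =>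
          intro E hED hbig
          have hEcard : n * c < E.card := by
            have : (n + 1) * c = n * c + c := by ring
            omega
          have hEne : E.Nonempty := Finset.card_pos.mp (by omega)
          obtain ⟨H₁, hH₁, hmax⟩ := Finset.exists_max_image E (fun H => tw7dep hc r (top H)) hEne
          have hH₁ℋ : H₁ ∈ ℋ := hDℋ H₁ (hED H₁ hH₁)
          have hH₁v : H₁.verts.Nonempty := by
            apply Set.nonempty_of_ncard_ne_zero
            have := tw7_card3 (h2c H₁ hH₁ℋ)
            omega
          set φ : G.Subgraph → V := fun B =>
            if h : (H₁.verts ∩ B.verts).Nonempty then h.choose else hH₁v.choose with hφdef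
          set N : Finset G.Subgraph :=
            E.filter (fun B => B ≠ H₁ ∧ (H₁.verts ∩ B.verts).Nonempty) with hNdef
          have hφmem : ∀ B ∈ N, φ B ∈ H₁.verts ∩ B.verts := by
            intro B hB
            have hBfil := (Finset.mem_filter.mp hB).2
            rw [hφdef]
            simp only [hBfil.2, dif_pos]
            exact hBfil.2.choose_spec
          have hφbag : ∀ B ∈ N, φ B ∈ β (top H₁) := by
            intro B hB
            have hBE := (Finset.mem_filter.mp hB).1
            have hBne := (Finset.mem_filter.mp hB).2.1
            apply pairkey H₁ hH₁ℋ B (hDℋ B (hED B hBE))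
              (hdisj H₁ (hED H₁ hH₁) B (hED B hBE) (fun h => hBne h.symm))
              (hmax B hBE)
            exact hφmem B hB
          -- bound on |N|
          have hNbound : N.card ≤ a := by
            rw [hadef]
            have himg : N.image φ ⊆ (β (top H₁)).toFinset := by
              intro v hv
              obtain ⟨B, hB, rfl⟩ := Finset.mem_image.mp hv
              exact Set.mem_toFinset.mpr (hφbag B hB)
            have hfib : ∀ v ∈ N.image φ, (N.filter (fun B => φ B = v)).card ≤ k - 2 := by
              intro v hv
              obtain ⟨B₀, hB₀, rfl⟩ := Finset.mem_image.mp hv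
              have hvH₁ : φ B₀ ∈ H₁.verts := (hφmem B₀ hB₀).1
              have hsub2 : N.filter (fun B => φ B = φ B₀) ⊆
                  (D.filter (fun H => φ B₀ ∈ H.verts)).erase H₁ := by
                intro B hB
                have h1 := Finset.mem_filter.mp hB
                have h2 := Finset.mem_filter.mp h1.1
                rw [Finset.mem_erase]
                refine ⟨h2.2.1, Finset.mem_filter.mpr ⟨hED B h2.1, ?_⟩⟩
                rw [← h1.2]
                exact (hφmem B h1.1).2
              have h3 := Finset.card_le_card hsub2
              have h4 : ((D.filter (fun H => φ B₀ ∈ H.verts)).erase H₁).card =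
                  (D.filter (fun H => φ B₀ ∈ H.verts)).card - 1 := by
                apply Finset.card_erase_of_mem
                exact Finset.mem_filter.mpr ⟨hED H₁ hH₁, hvH₁⟩
              have h5 := hheavy (φ B₀)
              omega
            have h6 := Finset.card_le_mul_card_image N (k - 2) hfib
            have h7 : (N.image φ).card ≤ w + 1 := by
              apply le_trans (Finset.card_le_card himg)
              rw [← Set.ncard_eq_toFinset_card']
              exact hBag _
            calc N.card ≤ (k - 2) * (N.image φ).card := h6
              _ ≤ (k - 2) * (w + 1) := Nat.mul_le_mul_left _ h7
          -- recurse on the rest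
          set Erest : Finset G.Subgraph := E \ insert H₁ N with hErest
          have hinsE : insert H₁ N ⊆ E :=
            Finset.insert_subset hH₁ (Finset.filter_subset _ _)
          have hErestcard : Erest.card = E.card - (insert H₁ N).card :=
            Finset.card_sdiff_of_subset hinsE
          have hinscard : (insert H₁ N).card ≤ c := by
            have := Finset.card_insert_le H₁ N
            omega
          have hrec : n * c < Erest.card + c := by
            have h8 : (n + 1) * c = n * c + c := by ring
            have h9 : (insert H₁ N).card ≤ E.card := Finset.card_le_card hinsE
            omega
          obtain ⟨E', hE'sub, hE'card, hE'pair⟩ := ih Erest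
            (by
              intro H hH
              have hH2 : H ∈ E \ insert H₁ N := hH
              exact hED H (Finset.mem_sdiff.mp hH2).1) hrec
          have hH₁notE' : H₁ ∉ E' := by
            intro h
            have hmem : H₁ ∈ E \ insert H₁ N := hE'sub H₁ h
            exact (Finset.mem_sdiff.mp hmem).2 (Finset.mem_insert_self _ _)
          have hdisj1 : ∀ B' ∈ E', H₁.verts ∩ B'.verts = ∅ := by
            intro B' hB'
            have hmem : B' ∈ E \ insert H₁ N := hE'sub B' hB'
            rw [Finset.mem_sdiff, Finset.mem_insert, not_or] at hmem
            have hBE : B' ∈ E := hmem.1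
            have hne : B' ≠ H₁ := hmem.2.1
            have hnotN : B' ∉ N := hmem.2.2
            rw [hNdef, Finset.mem_filter, not_and] at hnotN
            have := hnotN hBE
            rw [not_and] at this
            exact Set.not_nonempty_iff_eq_empty.mp (this hne)
          refine ⟨insert H₁ E', ?_, ?_, ?_⟩
          · intro H hH
            rcases Finset.mem_insert.mp hH with rfl | hH
            · exact hH₁
            · have hmem : H ∈ E \ insert H₁ N := hE'sub H hH
              exact (Finset.mem_sdiff.mp hmem).1
          · rw [Finset.card_insert_of_notMem hH₁notE', hE'card]
          · intro A hA B hB hAB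
            rcases Finset.mem_insert.mp hA with rfl | hA' <;>
              rcases Finset.mem_insert.mp hB with rfl | hB'
            · exact absurd rfl hAB
            · exact hdisj1 B hB'
            · rw [Set.inter_comm]; exact hdisj1 A hA'
            · exact hE'pair A hA' B hB' hAB
      have harith : k * c < D.card + c := by
        have hkc : k * c = k * a + k := by rw [hcdef]; ring
        rcases Nat.lt_or_ge k 2 with hk2 | hk2
        · have hk1 : k = 1 := by omega
          subst hk1
          have h0 : 1 * (1 - 1) * (w + 1) = 0 := by norm_num
          rw [h0] at hDbig
          omega
        · have h1 : k * (k - 1) * (w + 1) = k * a + k * (w + 1) := by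
            have he1 : k - 1 = (k - 2) + 1 := by omega
            rw [hadef, he1]
            ring
          have h2 : k ≤ k * (w + 1) := Nat.le_mul_of_pos_right k (by omega)
          rw [h1] at hDbig
          omega
      obtain ⟨E', hE'sub, hE'card, hE'pair⟩ := extract k D (fun H hH => hH) harith
      have hE'ne : E'.Nonempty := by
        apply Finset.card_pos.mp
        omega
      obtain ⟨H₀, hH₀⟩ := hE'ne
      have hH₀ℋ : H₀ ∈ ℋ := hDℋ H₀ (hE'sub H₀ hH₀)
      have hH₀v : H₀.verts.Nonempty := by
        apply Set.nonempty_of_ncard_ne_zero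
        have := tw7_card3 (h2c H₀ hH₀ℋ)
        omega
      obtain ⟨v₀, _⟩ := hH₀v
      refine flower E' v₀ hE'card (fun H hH => hDℋ H (hE'sub H hH)) ?_
      intro A hA B hB hAB u hu
      rw [hE'pair A hA B hB hAB] at hu
      exact absurd hu (Set.notMem_empty u)
end
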